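/- arXiv:2510.07470 — 5 statements merged into one kernel-verified Lean document; each statement's English description precedes it below -/
import Mathlib

section
/- (Convergence rate of RED-Prox.) Let f, g : ℝ^d → ℝ be differentiable, with f convex with L_f-Lipschitz gradient and g with L_g-Lipschitz gradient; set L = L_f + L_g and F = f + g, and assume F is bounded below by m ∈ ℝ. Let η = 1/L, let x⁰ ∈ ℝ^d, and let the iterates satisfy (x^{k+1} − x^k)/η = −∇g(x^k) − ∇f(x^{k+1}) for all k ≥ 0 (the first-order optimality characterization of x^{k+1} = prox_{ηf}(x^k − η∇g(x^k))). Then for every integer n ≥ 1 there exists k ∈ {0, …, n−1} with ‖∇F(x^k)‖ ≤ (2/√n)·√(2·L·(F(x⁰) − m)). -/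
open Set

lemma dirDeriv {E : Type*} [NormedAddCommGroup E] [InnerProductSpace ℝ E] [CompleteSpace E]
    (u : E → ℝ) (hu : Differentiable ℝ u) (x v : E) (t : ℝ) :
    HasDerivAt (fun s : ℝ => u (x + s • v)) (inner ℝ (gradient u (x + t • v)) v : ℝ) t := by
  have hc : HasDerivAt (fun s : ℝ => x + s • v) v t := by
    simpa using ((hasDerivAt_id t).smul_const v).const_add x
  have hg := (hu (x + t • v)).hasGradientAt.hasFDerivAt
  have := hg.comp_hasDerivAt t hc
  simp [InnerProductSpace.toDual_apply_apply] at this ⊢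
  exact this

lemma convex_grad_ineq {E : Type*} [NormedAddCommGroup E] [InnerProductSpace ℝ E] [CompleteSpace E]
    (u : E → ℝ) (hconv : ConvexOn ℝ Set.univ u) (hu : Differentiable ℝ u) (x y : E) :
    u x + inner ℝ (gradient u x) (y - x) ≤ u y := by
  set v := y - x with hv
  set φ : ℝ → ℝ := fun t => u (x + t • v) with hφ
  have hconvφ : ConvexOn ℝ Set.univ φ := by
    have h1 := hconv.comp_affineMap (AffineMap.lineMap x y)
    have h2 : φ = u ∘ (AffineMap.lineMap x y) := by
      funext t
      simp [hφ, Function.comp, AffineMap.lineMap_apply_module', hv, add_comm]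
    rw [h2]
    simpa using h1
  have hd0 : HasDerivAt φ (inner ℝ (gradient u x) v : ℝ) 0 := by
    have := dirDeriv u hu x v 0
    simpa using this
  have hs := hconvφ.le_slope_of_hasDerivAt (Set.mem_univ (0:ℝ)) (Set.mem_univ (1:ℝ)) one_pos hd0
  rw [slope_def_field] at hs
  have hφ1 : φ 1 = u y := by simp [hφ, hv]
  have hφ0 : φ 0 = u x := by simp [hφ]
  rw [hφ1, hφ0] at hs
  have : (u y - u x) / (1 - 0) = u y - u x := by norm_num
  rw [this] at hs
  linarith

lemma descent_lemma {E : Type*} [NormedAddCommGroup E] [InnerProductSpace ℝ E] [CompleteSpace E]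
    (u : E → ℝ) (hu : Differentiable ℝ u) (Lu : ℝ)
    (hlip : ∀ a b : E, ‖gradient u a - gradient u b‖ ≤ Lu * ‖a - b‖) (x y : E) :
    u y ≤ u x + inner ℝ (gradient u x) (y - x) + Lu / 2 * ‖y - x‖ ^ 2 := by
  set v := y - x with hv
  set c : ℝ := inner ℝ (gradient u x) v with hc
  set a : ℝ := Lu * ‖v‖ ^ 2 with ha
  set h : ℝ → ℝ := fun t => u (x + t • v) - (c * t + a * t ^ 2 / 2) with hh
  have hderiv : ∀ t : ℝ,
      HasDerivAt h ((inner ℝ (gradient u (x + t • v)) v : ℝ) - (c + a * t)) t := by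
    intro t
    have h1 := dirDeriv u hu x v t
    have h2 : HasDerivAt (fun t : ℝ => c * t + a * t ^ 2 / 2) (c + a * t) t := by
      have := ((hasDerivAt_id t).const_mul c).add (((hasDerivAt_pow 2 t).const_mul a).div_const 2)
      rw [show c + a * t = c * 1 + a * ((2:ℕ) * t ^ (2 - 1)) / 2 by push_cast; ring]
      exact this
    exact h1.sub h2
  have hanti : AntitoneOn h (Set.Icc (0:ℝ) 1) := by
    apply antitoneOn_of_deriv_nonpos (convex_Icc 0 1)
    · exact fun t _ => ((hderiv t).differentiableAt).continuousAt.continuousWithinAt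
    · exact fun t _ => ((hderiv t).differentiableAt).differentiableWithinAt
    · intro t ht
      rw [interior_Icc] at ht
      rw [(hderiv t).deriv]
      have hsub : (inner ℝ (gradient u (x + t • v)) v : ℝ) - c
          = inner ℝ (gradient u (x + t • v) - gradient u x) v := by
        rw [inner_sub_left]
      have hb1 : (inner ℝ (gradient u (x + t • v) - gradient u x) v : ℝ)
          ≤ ‖gradient u (x + t • v) - gradient u x‖ * ‖v‖ := real_inner_le_norm _ _
      have hb2 : ‖gradient u (x + t • v) - gradient u x‖ ≤ Lu * (t * ‖v‖) := by
        have := hlip (x + t • v) x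
        simpa [norm_smul, abs_of_pos ht.1] using this
      have hv0 : (0:ℝ) ≤ ‖v‖ := norm_nonneg _
      have ha' : a * t = Lu * (t * ‖v‖) * ‖v‖ := by rw [ha]; ring
      linarith [hsub.le, hsub.ge, hb1, mul_le_mul_of_nonneg_right hb2 hv0, ha'.le, ha'.ge]
  have h10 : h 1 ≤ h 0 :=
    hanti (Set.left_mem_Icc.mpr zero_le_one) (Set.right_mem_Icc.mpr zero_le_one) zero_le_one
  have e1 : x + (1:ℝ) • v = y := by rw [one_smul, hv]; abel
  simp only [hh, e1, zero_smul, add_zero, mul_one, mul_zero, one_pow] at h10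
  rw [ha] at h10
  norm_num at h10
  linarith

lemma gradient_add' {E : Type*} [NormedAddCommGroup E] [InnerProductSpace ℝ E] [CompleteSpace E]
    (f g F : E → ℝ) (hFdef : ∀ w, F w = f w + g w)
    (hfd : Differentiable ℝ f) (hgd : Differentiable ℝ g) (w : E) :
    gradient F w = gradient f w + gradient g w := by
  have hFeq : F = fun w => f w + g w := funext hFdef
  have h2 : HasGradientAt F (gradient f w + gradient g w) w := by
    rw [hasGradientAt_iff_hasFDerivAt, map_add, hFeq]
    exact ((hfd w).hasGradientAt.hasFDerivAt).add ((hgd w).hasGradientAt.hasFDerivAt)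
  exact h2.gradient

/-- Convergence rate of RED-Prox (proximal gradient method,
iterates characterized by the first-order optimality condition). -/
theorem red_prox_convergence_rate
    {d : ℕ} (hd : 1 ≤ d)
    (f g F : EuclideanSpace ℝ (Fin d) → ℝ) (Lf Lg L : ℝ)
    (hL : 0 < L) (hLdef : L = Lf + Lg)
    (hFdef : ∀ w, F w = f w + g w)
    (hfd : Differentiable ℝ f) (hgd : Differentiable ℝ g)
    (hfconv : ConvexOn ℝ Set.univ f)
    (hflip : ∀ a b : EuclideanSpace ℝ (Fin d),
      ‖gradient f a - gradient f b‖ ≤ Lf * ‖a - b‖)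
    (hglip : ∀ a b : EuclideanSpace ℝ (Fin d),
      ‖gradient g a - gradient g b‖ ≤ Lg * ‖a - b‖)
    (m : ℝ) (hm : ∀ y, m ≤ F y)
    (η : ℝ) (hη : η = 1 / L)
    (x : ℕ → EuclideanSpace ℝ (Fin d))
    (hiter : ∀ k : ℕ,
      (1 / η) • (x (k + 1) - x k) = -gradient g (x k) - gradient f (x (k + 1)))
    (n : ℕ) (hn : 1 ≤ n) :
    ∃ k < n, ‖gradient F (x k)‖ ≤
      (2 / Real.sqrt n) * Real.sqrt (2 * L * (F (x 0) - m)) := by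
  -- nonnegativity of Lipschitz constants
  have hunit : ∃ a b : EuclideanSpace ℝ (Fin d), ‖a - b‖ = 1 := by
    refine ⟨EuclideanSpace.single ⟨0, hd⟩ (1:ℝ), 0, ?_⟩
    simp [EuclideanSpace.norm_single]
  obtain ⟨a, b, hab⟩ := hunit
  have hLf0 : 0 ≤ Lf := by
    have := (norm_nonneg _).trans (hflip a b); rwa [hab, mul_one] at this
  have hLg0 : 0 ≤ Lg := by
    have := (norm_nonneg _).trans (hglip a b); rwa [hab, mul_one] at this
  -- rewrite the iteration
  have hLη : (1 / η) = L := by rw [hη, one_div_one_div]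
  have hLD : ∀ k : ℕ, L • (x (k + 1) - x k) = -gradient g (x k) - gradient f (x (k + 1)) := by
    intro k; have := hiter k; rwa [hLη] at this
  -- key descent inequality
  have key : ∀ k : ℕ, F (x (k + 1)) + L / 2 * ‖x (k + 1) - x k‖ ^ 2 ≤ F (x k) := by
    intro k
    set D := x (k + 1) - x k with hD
    have hg1 := descent_lemma g hgd Lg hglip (x k) (x (k + 1))
    have hf1 := convex_grad_ineq f hfconv hfd (x (k + 1)) (x k)
    have hxkD : x k - x (k + 1) = -D := by rw [hD]; abel
    rw [hxkD, inner_neg_right] at hf1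
    have hinner : (inner ℝ (gradient g (x k)) D : ℝ) + inner ℝ (gradient f (x (k + 1))) D
        = -(L * ‖D‖ ^ 2) := by
      have h1 : (inner ℝ (gradient g (x k) + gradient f (x (k + 1))) D : ℝ)
          = inner ℝ (-(L • D)) D := by
        congr 1
        rw [hLD k]; abel
      rw [inner_add_left, inner_neg_left, real_inner_smul_left,
        real_inner_self_eq_norm_sq] at h1
      exact h1
    have hD2 : (0:ℝ) ≤ ‖D‖ ^ 2 := by positivity
    have hLgL : Lg ≤ L := by linarith
    rw [hFdef (x (k + 1)), hFdef (x k)]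
    nlinarith [mul_le_mul_of_nonneg_right hLgL hD2]
  -- gradient bound
  have hgradbound : ∀ k : ℕ, ‖gradient F (x k)‖ ≤ 2 * L * ‖x (k + 1) - x k‖ := by
    intro k
    set D := x (k + 1) - x k with hD
    have hsplit : gradient F (x k)
        = (gradient f (x k) - gradient f (x (k + 1))) + (-(L • D)) := by
      rw [gradient_add' f g F hFdef hfd hgd (x k)]
      have h1 : -(L • D) = gradient f (x (k + 1)) + gradient g (x k) := by
        rw [hLD k]; abel
      rw [h1]; abel
    have hb1 : ‖gradient f (x k) - gradient f (x (k + 1))‖ ≤ Lf * ‖D‖ := by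
      have := hflip (x k) (x (k + 1))
      rwa [show x k - x (k + 1) = -D by rw [hD]; abel, norm_neg] at this
    have hb2 : ‖-(L • D)‖ = L * ‖D‖ := by
      rw [norm_neg, norm_smul, Real.norm_eq_abs, abs_of_pos hL]
    calc ‖gradient F (x k)‖ ≤ ‖gradient f (x k) - gradient f (x (k + 1))‖ + ‖-(L • D)‖ := by
          rw [hsplit]; exact norm_add_le _ _
      _ ≤ Lf * ‖D‖ + L * ‖D‖ := by rw [hb2]; linarith
      _ ≤ 2 * L * ‖D‖ := by nlinarith [norm_nonneg D]
  -- summation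
  have hsum : ∀ N : ℕ,
      (∑ k ∈ Finset.range N, L / 2 * ‖x (k + 1) - x k‖ ^ 2) + F (x N) ≤ F (x 0) := by
    intro N
    induction N with
    | zero => simp
    | succ N ih =>
      rw [Finset.sum_range_succ]
      have := key N
      linarith
  have hc0 : 0 ≤ F (x 0) - m := by have := hm (x 0); linarith
  have hnpos : (0:ℝ) < n := by exact_mod_cast hn
  -- find a good index
  have hex : ∃ k, k < n ∧ L / 2 * ‖x (k + 1) - x k‖ ^ 2 ≤ (F (x 0) - m) / n := by
    by_contra hcon
    push_neg at hcon
    have h1 : ∑ k ∈ Finset.range n, ((F (x 0) - m) / n)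
        < ∑ k ∈ Finset.range n, L / 2 * ‖x (k + 1) - x k‖ ^ 2 := by
      apply Finset.sum_lt_sum_of_nonempty
      · exact Finset.nonempty_range_iff.mpr (by omega)
      · intro k hk
        exact hcon k (Finset.mem_range.mp hk)
    rw [Finset.sum_const, Finset.card_range, nsmul_eq_mul] at h1
    have h2 := hsum n
    have h3 := hm (x n)
    have h4 : (n:ℝ) * ((F (x 0) - m) / n) = F (x 0) - m := by
      field_simp
    linarith
  obtain ⟨k, hk, hk2⟩ := hex
  refine ⟨k, hk, ?_⟩
  set D := x (k + 1) - x k with hD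
  set A := ‖gradient F (x k)‖ with hA
  have hA0 : 0 ≤ A := norm_nonneg _
  have hAb : A ≤ 2 * L * ‖D‖ := hgradbound k
  have hR0 : 0 ≤ (2 / Real.sqrt n) * Real.sqrt (2 * L * (F (x 0) - m)) := by positivity
  have hRsq : ((2 / Real.sqrt n) * Real.sqrt (2 * L * (F (x 0) - m))) ^ 2
      = 8 * L * ((F (x 0) - m) / n) := by
    rw [mul_pow, div_pow, Real.sq_sqrt (show (0:ℝ) ≤ 2 * L * (F (x 0) - m) by positivity),
      Real.sq_sqrt hnpos.le]
    ring
  have hA2 : A ^ 2 ≤ ((2 / Real.sqrt n) * Real.sqrt (2 * L * (F (x 0) - m))) ^ 2 := by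
    rw [hRsq]
    have h5 : A ^ 2 ≤ (2 * L * ‖D‖) ^ 2 := by
      apply pow_le_pow_left₀ hA0 hAb
    have h6 : (2 * L * ‖D‖) ^ 2 = 8 * L * (L / 2 * ‖D‖ ^ 2) := by ring
    have h7 : 8 * L * (L / 2 * ‖D‖ ^ 2) ≤ 8 * L * ((F (x 0) - m) / n) := by
      apply mul_le_mul_of_nonneg_left hk2 (by positivity)
    linarith
  calc A = Real.sqrt (A ^ 2) := (Real.sqrt_sq hA0).symm
    _ ≤ Real.sqrt (((2 / Real.sqrt n) * Real.sqrt (2 * L * (F (x 0) - m))) ^ 2) :=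
        Real.sqrt_le_sqrt hA2
    _ = (2 / Real.sqrt n) * Real.sqrt (2 * L * (F (x 0) - m)) := Real.sqrt_sq hR0
end

section
/- (Convergence of RISP-Prox, Theorem 2.) Let f, g : ℝ^d → ℝ be twice differentiable, with f convex, ∇f L_f-Lipschitz and Hessian of f ρ_f-Lipschitz, and with g ν-weakly convex, ∇g L_g-Lipschitz and Hessian of g ρ_g-Lipschitz. Set L = L_f + L_g, ρ = ρ_f + ρ_g, F = f + g, assume F is bounded below by m ∈ ℝ, and let Δ_F = F(x⁰) − m for an initial point x⁰ ∈ ℝ^d. Let n ≥ 1 be an integer, set ε = Δ_F^{4/7}·(2L)^{2/7}·ρ^{1/7}·n^{−4/7} + 4·L²·ρ^{−1}·n^{−4}, and assume ν ≤ 8·(ε·ρ)^{1/4}·√L. Run the RISP-Prox algorithm with parameters η = 1/(8L), B = √(ε/(4ρ)), θ = 4·(ε·ρ·η²)^{1/4}, assumed to satisfy θ ∈ (0,1), and epoch length K = θ^{−1}. Then the algorithm terminates after at most n iterations in total (across all restarts) and outputs a point ẑ with ‖∇F(ẑ)‖ ≤ 45·ε. -/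
set_option maxHeartbeats 1600000

open Set Finset Real
open scoped RealInnerProductSpace

section RispAux
variable {E : Type*} [NormedAddCommGroup E] [InnerProductSpace ℝ E] [CompleteSpace E]

lemma grad_inner (u : E → ℝ) (x v : E) : ⟪gradient u x, v⟫ = fderiv ℝ u x v :=
  InnerProductSpace.toDual_symm_apply

lemma toDual_grad (u : E → ℝ) (x : E) :
    (InnerProductSpace.toDual ℝ E) (gradient u x) = fderiv ℝ u x :=
  (InnerProductSpace.toDual ℝ E).apply_symm_apply _

lemma fderiv_sub_norm_eq (u : E → ℝ) (p q : E) :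
    ‖fderiv ℝ u p - fderiv ℝ u q‖ = ‖gradient u p - gradient u q‖ := by
  rw [← toDual_grad u p, ← toDual_grad u q, ← map_sub]
  exact (InnerProductSpace.toDual ℝ E).norm_map _

lemma convex_grad_ineq_s6 (u : E → ℝ) (hu : Differentiable ℝ u)
    (hc : ConvexOn ℝ Set.univ u) (a b : E) :
    u a + ⟪gradient u a, b - a⟫ ≤ u b := by
  have hline : HasDerivAt (fun t : ℝ => a + t • (b - a)) (b - a) 0 := by
    simpa using ((hasDerivAt_id (0:ℝ)).smul_const (b - a)).const_add a
  have hφ : HasDerivAt (fun t : ℝ => u (a + t • (b - a))) (fderiv ℝ u a (b - a)) 0 := by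
    have h := (hu (a + (0:ℝ) • (b - a))).hasFDerivAt.comp_hasDerivAt 0 hline
    simp only [zero_smul, add_zero] at h
    exact h
  have hconv : ConvexOn ℝ Set.univ (fun t : ℝ => u (a + t • (b - a))) := by
    have h2 := hc.comp_affineMap (AffineMap.lineMap a b)
    have he : (fun t : ℝ => u (a + t • (b - a))) = (u ∘ (AffineMap.lineMap a b)) := by
      funext t
      simp [AffineMap.lineMap_apply, add_comm]
    rw [he]
    simpa using h2
  have hs := hconv.le_slope_of_hasDerivAt (mem_univ (0:ℝ)) (mem_univ (1:ℝ)) one_pos hφ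
  rw [slope_def_field] at hs
  have hb : a + (1:ℝ) • (b - a) = b := by
    rw [one_smul]; abel
  have hb0 : a + (0:ℝ) • (b - a) = a := by
    rw [zero_smul]; abel
  rw [hb, hb0] at hs
  norm_num at hs
  rw [grad_inner]
  have hms := (fderiv ℝ u a).map_sub b a
  rw [hms]
  linarith

lemma seg_norm_le {a b p : E} (hp : p ∈ segment ℝ a b) : ‖p - a‖ ≤ ‖b - a‖ := by
  rw [segment_eq_image] at hp
  obtain ⟨t, ht, rfl⟩ := hp
  have : (1 - t) • a + t • b - a = t • (b - a) := by
    rw [smul_sub]; module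
  rw [this, norm_smul]
  have h1 : |t| ≤ 1 := by rw [abs_le]; constructor <;> [linarith [ht.1]; exact ht.2]
  calc ‖t‖ * ‖b - a‖ ≤ 1 * ‖b - a‖ := by
        apply mul_le_mul_of_nonneg_right _ (norm_nonneg _)
        simpa [Real.norm_eq_abs] using h1
    _ = ‖b - a‖ := one_mul _

lemma lipschitz_grad_upper (u : E → ℝ) (hu : Differentiable ℝ u) {C : ℝ} (hC : 0 ≤ C)
    (hLip : ∀ p q : E, ‖gradient u p - gradient u q‖ ≤ C * ‖p - q‖) (a b : E) :
    u b ≤ u a + ⟪gradient u a, b - a⟫ + C * ‖b - a‖ ^ 2 := by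
  have key : ‖u b - u a - (fderiv ℝ u a) (b - a)‖ ≤ (C * ‖b - a‖) * ‖b - a‖ := by
    refine Convex.norm_image_sub_le_of_norm_fderiv_le' (fun x _ => (hu x)) (fun p hp => ?_)
      (convex_segment a b) (left_mem_segment ℝ a b) (right_mem_segment ℝ a b)
    rw [fderiv_sub_norm_eq]
    refine (hLip p a).trans ?_
    exact mul_le_mul_of_nonneg_left (seg_norm_le hp) hC
  rw [Real.norm_eq_abs, abs_le] at key
  have := key.1
  rw [grad_inner]
  nlinarith [key.2]

lemma hess_taylor (G : E → E) (hG : Differentiable ℝ G) {c : ℝ} (hc : 0 ≤ c)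
    (hH : ∀ p q : E, ‖fderiv ℝ G p - fderiv ℝ G q‖ ≤ c * ‖p - q‖) (a b : E) :
    ‖G b - G a - (fderiv ℝ G a) (b - a)‖ ≤ c * ‖b - a‖ ^ 2 := by
  have key : ‖G b - G a - (fderiv ℝ G a) (b - a)‖ ≤ (c * ‖b - a‖) * ‖b - a‖ := by
    refine Convex.norm_image_sub_le_of_norm_fderiv_le' (fun x _ => (hG x)) (fun p hp => ?_)
      (convex_segment a b) (left_mem_segment ℝ a b) (right_mem_segment ℝ a b)
    refine (hH p a).trans ?_
    exact mul_le_mul_of_nonneg_left (seg_norm_le hp) hc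
  calc ‖G b - G a - (fderiv ℝ G a) (b - a)‖ ≤ (c * ‖b - a‖) * ‖b - a‖ := key
    _ = c * ‖b - a‖ ^ 2 := by ring

lemma opnorm_fderiv_le (G : E → E) {C : ℝ} (hC : 0 ≤ C)
    (hLip : ∀ p q : E, ‖G p - G q‖ ≤ C * ‖p - q‖) (a : E) :
    ‖fderiv ℝ G a‖ ≤ C := by
  have hl : LipschitzWith ⟨C, hC⟩ G := by
    apply LipschitzWith.of_dist_le_mul
    intro p q
    rw [dist_eq_norm, dist_eq_norm]; exact hLip p q
  exact norm_fderiv_le_of_lipschitz ℝ hl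

lemma weak_grad_ineq (u : E → ℝ) (hu : Differentiable ℝ u) {ν : ℝ}
    (hw : ConvexOn ℝ Set.univ (fun w : E => u w + (ν / 2) * ‖w‖ ^ 2)) (a b : E) :
    u a + ⟪gradient u a, b - a⟫ - (ν / 2) * ‖b - a‖ ^ 2 ≤ u b := by
  set h : E → ℝ := fun w => u w + (ν / 2) * ‖w‖ ^ 2 with hh_def
  have hq : Differentiable ℝ (fun w : E => (ν / 2) * ‖w‖ ^ 2) := by
    have : Differentiable ℝ (fun w : E => ⟪w, w⟫) :=
      Differentiable.inner ℝ differentiable_id differentiable_id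
    have h2 : (fun w : E => (ν / 2) * ‖w‖ ^ 2) = fun w => (ν / 2) * ⟪w, w⟫ := by
      funext w; rw [real_inner_self_eq_norm_sq]
    rw [h2]
    exact this.const_mul _
  have hhd : Differentiable ℝ h := hu.add hq
  have hkey := convex_grad_ineq_s6 h hhd hw a b
  have hfd : ∀ v : E, fderiv ℝ h a v = fderiv ℝ u a v + ν * ⟪a, v⟫ := by
    intro v
    have h1 : fderiv ℝ h a = fderiv ℝ u a + fderiv ℝ (fun w : E => (ν / 2) * ‖w‖ ^ 2) a :=
      fderiv_add (hu a) (hq a)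
    have h2 : (fun w : E => (ν / 2) * ‖w‖ ^ 2) = fun w => (ν / 2) * ⟪w, w⟫ := by
      funext w; rw [real_inner_self_eq_norm_sq]
    have h3 : fderiv ℝ (fun w : E => (ν / 2) * ‖w‖ ^ 2) a v = ν * ⟪a, v⟫ := by
      rw [h2]
      have hinner : fderiv ℝ (fun w : E => ⟪w, w⟫) a v = ⟪a, v⟫ + ⟪v, a⟫ := by
        have := fderiv_inner_apply ℝ (f := fun w : E => w) (g := fun w : E => w) (x := a)
          differentiableAt_id differentiableAt_id v
        simpa using this
      have hconst : fderiv ℝ (fun w : E => (ν / 2) * ⟪w, w⟫) a v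
          = (ν / 2) * fderiv ℝ (fun w : E => ⟪w, w⟫) a v := by
        rw [fderiv_const_mul]
        · rfl
        · exact (Differentiable.inner ℝ differentiable_id differentiable_id) a
      rw [hconst, hinner, real_inner_comm v a]; ring
    rw [h1]; simp [h3]
  have hip : ⟪gradient h a, b - a⟫ = ⟪gradient u a, b - a⟫ + ν * ⟪a, b - a⟫ := by
    rw [grad_inner, grad_inner, hfd]
  have hnorm : ‖b - a‖ ^ 2 = ‖b‖ ^ 2 - 2 * ⟪b, a⟫ + ‖a‖ ^ 2 := by
    have := norm_sub_sq_real b a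
    linarith
  have hiab : ⟪a, b - a⟫ = ⟪a, b⟫ - ‖a‖ ^ 2 := by
    rw [inner_sub_right, real_inner_self_eq_norm_sq]
  simp only [hh_def] at hkey
  rw [hip] at hkey
  have h1 : ν * ⟪a, b - a⟫ = ν * ⟪a, b⟫ - ν * ‖a‖ ^ 2 := by rw [hiab]; ring
  have h2 : (ν / 2) * ‖b - a‖ ^ 2 = ν / 2 * ‖b‖ ^ 2 - ν * ⟪b, a⟫ + ν / 2 * ‖a‖ ^ 2 := by
    rw [hnorm]; ring
  have h4 : ν * ⟪a, b⟫ = ν * ⟪b, a⟫ := by rw [real_inner_comm]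
  linarith [hkey, h1, h2, h4]

private lemma arith2 {L ρ θ ε nr : ℝ} (hL : 0 < L) (hρ : 0 < ρ) (hn : 0 < nr) (hθ0 : 0 < θ)
    (h1 : 4 * L ^ 2 * ρ⁻¹ * (nr ^ 4)⁻¹ ≤ ε) (hθ4 : 4 * ε * ρ = L ^ 2 * θ ^ 4) :
    2 / nr ≤ θ := by
  have hn4 : (0:ℝ) < nr ^ 4 := by positivity
  have h2 := mul_le_mul_of_nonneg_right h1 (mul_pos hρ hn4).le
  have e : 4 * L ^ 2 * ρ⁻¹ * (nr ^ 4)⁻¹ * (ρ * nr ^ 4) = 4 * L ^ 2 := by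
    field_simp
  rw [e] at h2
  have h5 : 4 * (ε * (ρ * nr ^ 4)) = L ^ 2 * (θ ^ 4 * nr ^ 4) := by
    linear_combination nr ^ 4 * hθ4
  have h6 : L ^ 2 * 16 ≤ L ^ 2 * (θ ^ 4 * nr ^ 4) := by nlinarith [h2, h5]
  have h7 : (16:ℝ) ≤ θ ^ 4 * nr ^ 4 := le_of_mul_le_mul_left h6 (by positivity)
  have h8 : (2 / nr) ^ 4 ≤ θ ^ 4 := by
    rw [div_pow, div_le_iff₀ hn4]
    norm_num
    linarith
  exact le_of_pow_le_pow_left₀ (by norm_num) hθ0.le h8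

private lemma arith1 {a t s : ℝ} (hs2 : (1.4:ℝ) ≤ s) (ha : 0 < a) (ht : 0 < t) :
    8 * a * t / s ≤ 6 * a * t := by
  rw [div_le_iff₀ (by linarith)]
  nlinarith [mul_pos ha ht, hs2]

lemma numerics {L ρ ΔF ε η B θ ν : ℝ} {n : ℕ}
    (hL : 0 < L) (hρ : 0 < ρ) (hΔF : 0 ≤ ΔF) (hn : 1 ≤ n)
    (hε : ε = ΔF ^ ((4 : ℝ) / 7) * (2 * L) ^ ((2 : ℝ) / 7) * ρ ^ ((1 : ℝ) / 7)
          * (n : ℝ) ^ (-(4 : ℝ) / 7)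
          + 4 * L ^ 2 * ρ⁻¹ * (n : ℝ) ^ (-(4 : ℝ)))
    (hν : ν ≤ 8 * (ε * ρ) ^ ((1 : ℝ) / 4) * Real.sqrt L)
    (hη : η = 1 / (8 * L)) (hB : B = Real.sqrt (ε / (4 * ρ)))
    (hθ : θ = 4 * (ε * ρ * η ^ 2) ^ ((1 : ℝ) / 4)) (hθ0 : 0 < θ) (hθ1 : θ < 1) :
    0 < ε ∧ B ^ 2 = ε / (4 * ρ) ∧ 0 < B ∧ 4 * ε * ρ = L ^ 2 * θ ^ 4 ∧ ε = L * B * θ ^ 2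
      ∧ 4 * ρ * B = L * θ ^ 2 ∧ ν ≤ 6 * L * θ ∧ (2 : ℝ) / n ≤ θ
      ∧ ΔF ≤ (n : ℝ) * L * B ^ 2 * θ ^ 3 := by
  have hn0 : (0:ℝ) < (n:ℝ) := by exact_mod_cast Nat.lt_of_lt_of_le Nat.zero_lt_one hn
  have ht1 : 0 ≤ ΔF ^ ((4 : ℝ) / 7) * (2 * L) ^ ((2 : ℝ) / 7) * ρ ^ ((1 : ℝ) / 7)
      * (n : ℝ) ^ (-(4 : ℝ) / 7) := by positivity
  have ht2 : 0 < 4 * L ^ 2 * ρ⁻¹ * (n : ℝ) ^ (-(4 : ℝ)) := by positivity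
  have hε0 : 0 < ε := by rw [hε]; linarith
  have hB2 : B ^ 2 = ε / (4 * ρ) := by
    rw [hB, Real.sq_sqrt]; positivity
  have hB0 : 0 < B := by
    rw [hB]; apply Real.sqrt_pos.2; positivity
  have hε4 : 4 * ρ * B ^ 2 = ε := by rw [hB2]; field_simp
  -- θ identity : 4 ε ρ = L² θ⁴
  have hθ4 : 4 * ε * ρ = L ^ 2 * θ ^ 4 := by
    have hX : (0:ℝ) ≤ ε * ρ * η ^ 2 := by positivity
    have h1 : ((ε * ρ * η ^ 2) ^ ((1:ℝ)/4)) ^ (4:ℕ) = ε * ρ * η ^ 2 := by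
      have h14 : ((1:ℝ)/4) = ((4:ℕ):ℝ)⁻¹ := by norm_num
      rw [h14]
      exact Real.rpow_inv_natCast_pow hX (by norm_num)
    have h2 : θ ^ 4 = 4 ^ 4 * (ε * ρ * η ^ 2) := by
      rw [hθ, mul_pow, h1]
    rw [hη] at h2
    have hL' : L ≠ 0 := ne_of_gt hL
    field_simp at h2
    linarith [h2]
  -- ε = L B θ²
  have hεLB : ε = L * B * θ ^ 2 := by
    have hsq : ε ^ 2 = (L * B * θ ^ 2) ^ 2 := by
      linear_combination (-ε) * hε4 + B ^ 2 * hθ4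
    calc ε = Real.sqrt (ε ^ 2) := (Real.sqrt_sq hε0.le).symm
      _ = Real.sqrt ((L * B * θ ^ 2) ^ 2) := by rw [hsq]
      _ = L * B * θ ^ 2 := Real.sqrt_sq (by positivity)
  have h4ρB : 4 * ρ * B = L * θ ^ 2 := by
    apply mul_left_cancel₀ (ne_of_gt hB0)
    linear_combination hε4 + hεLB
  -- ν bound
  have hνθ : ν ≤ 6 * L * θ := by
    have hy : (0:ℝ) ≤ Real.sqrt L * θ / Real.sqrt 2 := by positivity
    have hLrw : Real.sqrt L ^ 2 = L := Real.sq_sqrt hL.le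
    have h2rw : Real.sqrt 2 ^ 2 = 2 := Real.sq_sqrt (by norm_num)
    have h2ne : Real.sqrt 2 ≠ 0 := by positivity
    have hpow : (Real.sqrt L * θ / Real.sqrt 2) ^ (4:ℕ) = ε * ρ := by
      have e : (Real.sqrt L * θ / Real.sqrt 2) ^ (4:ℕ)
          = (Real.sqrt L ^ 2) ^ 2 * θ ^ 4 / (Real.sqrt 2 ^ 2) ^ 2 := by
        ring
      rw [e, hLrw, h2rw]
      linear_combination (-(1:ℝ)/4) * hθ4
    have hq : (ε * ρ) ^ ((1:ℝ)/4) = Real.sqrt L * θ / Real.sqrt 2 := by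
      have h14 : ((1:ℝ)/4) = ((4:ℕ):ℝ)⁻¹ := by norm_num
      rw [h14, ← hpow]
      exact Real.pow_rpow_inv_natCast hy (by norm_num)
    rw [hq] at hν
    have hs2 : (1.4:ℝ) ≤ Real.sqrt 2 := by
      nlinarith [h2rw, Real.sqrt_nonneg 2]
    have hsL : 0 ≤ Real.sqrt L := Real.sqrt_nonneg L
    have heq : 8 * (Real.sqrt L * θ / Real.sqrt 2) * Real.sqrt L
        = 8 * (Real.sqrt L ^ 2) * θ / Real.sqrt 2 := by
      ring
    rw [heq, hLrw] at hν
    linarith [arith1 hs2 hL hθ0]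
  -- 2/n ≤ θ
  have hrw : (n:ℝ) ^ (-(4:ℝ)) = ((n:ℝ) ^ (4:ℕ))⁻¹ := by
    rw [Real.rpow_neg hn0.le]
    rw [← Real.rpow_natCast (n:ℝ) 4]; norm_num
  have hnθ : (2:ℝ)/n ≤ θ := by
    have ht2' : 4 * L ^ 2 * ρ⁻¹ * ((n:ℝ)^(4:ℕ))⁻¹ ≤ ε := by
      rw [← hrw, hε]; linarith
    exact arith2 hL hρ hn0 hθ0 ht2' hθ4
  -- ΔF ≤ n L B² θ³
  have hΔFle : ΔF ≤ (n : ℝ) * L * B ^ 2 * θ ^ 3 := by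
    set D : ℝ := (n : ℝ) * L * B ^ 2 * θ ^ 3 with hD
    have hD0 : 0 < D := by rw [hD]; positivity
    by_contra hcon
    push_neg at hcon
    have hkey : ∀ y : ℝ, 0 ≤ y →
        y ^ ((4 : ℝ) / 7) * (2 * L) ^ ((2 : ℝ) / 7) * ρ ^ ((1 : ℝ) / 7) * (n : ℝ) ^ (-(4 : ℝ) / 7)
        = (y ^ (4:ℕ) * ((2*L) ^ (2:ℕ) * (ρ * ((n:ℝ) ^ (-(4:ℝ)))))) ^ (((7:ℕ):ℝ)⁻¹) := by
      intro y hy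
      have h7 : (((7:ℕ):ℝ)⁻¹) = (1:ℝ)/7 := by norm_num
      rw [h7]
      conv_rhs => rw [Real.mul_rpow (by positivity) (by positivity),
        Real.mul_rpow (by positivity) (by positivity),
        Real.mul_rpow (by positivity) (by positivity)]
      have e1 : (y ^ (4:ℕ)) ^ ((1:ℝ)/7) = y ^ ((4:ℝ)/7) := by
        rw [← Real.rpow_natCast y 4, ← Real.rpow_mul hy]
        norm_num
      have e2 : ((2*L) ^ (2:ℕ)) ^ ((1:ℝ)/7) = (2*L) ^ ((2:ℝ)/7) := by
        rw [← Real.rpow_natCast (2*L) 2, ← Real.rpow_mul (by positivity)]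
        norm_num
      have e3 : ((n:ℝ) ^ (-(4:ℝ))) ^ ((1:ℝ)/7) = (n:ℝ) ^ (-(4:ℝ)/7) := by
        rw [← Real.rpow_mul hn0.le]
        norm_num
      rw [e1, e2, e3]
      ring
    have hP := hkey ΔF hΔF
    have hQ := hkey D hD0.le
    have hkey7 : ε ^ (7:ℕ) * ((n:ℝ))^(4:ℕ) = D ^ (4:ℕ) * ((2*L)^(2:ℕ) * ρ) := by
      rw [hD, hεLB]
      linear_combination (-((n:ℝ)^4*L^6*B^7*θ^12)) * h4ρB
    have hεQ : (D ^ (4:ℕ) * ((2*L) ^ (2:ℕ) * (ρ * ((n:ℝ) ^ (-(4:ℝ)))))) = ε ^ (7:ℕ) := by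
      rw [hrw]
      have hne : ((n:ℝ) ^ (4:ℕ)) ≠ 0 := by positivity
      field_simp
      linear_combination -hkey7
    have hεval : ε = (D ^ (4:ℕ) * ((2*L) ^ (2:ℕ) * (ρ * ((n:ℝ) ^ (-(4:ℝ)))))) ^ (((7:ℕ):ℝ)⁻¹) := by
      rw [hεQ, Real.pow_rpow_inv_natCast hε0.le (by norm_num)]
    have hQpos : (0:ℝ) < D ^ (4:ℕ) * ((2*L) ^ (2:ℕ) * (ρ * ((n:ℝ) ^ (-(4:ℝ))))) := by positivity
    have hlt : (D ^ (4:ℕ) * ((2*L) ^ (2:ℕ) * (ρ * ((n:ℝ) ^ (-(4:ℝ))))))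
        < (ΔF ^ (4:ℕ) * ((2*L) ^ (2:ℕ) * (ρ * ((n:ℝ) ^ (-(4:ℝ)))))) := by
      have hDF : D ^ (4:ℕ) < ΔF ^ (4:ℕ) := pow_lt_pow_left₀ hcon hD0.le (by norm_num)
      exact mul_lt_mul_of_pos_right hDF (by positivity)
    have hmono := Real.rpow_lt_rpow hQpos.le hlt (by norm_num : (0:ℝ) < (((7:ℕ):ℝ)⁻¹))
    rw [← hεval, ← hP] at hmono
    have hub : ΔF ^ ((4 : ℝ) / 7) * (2 * L) ^ ((2 : ℝ) / 7) * ρ ^ ((1 : ℝ) / 7)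
        * (n : ℝ) ^ (-(4 : ℝ) / 7) ≤ ε := by rw [hε]; linarith
    linarith
  exact ⟨hε0, hB2, hB0, hθ4, hεLB, h4ρB, hνθ, hnθ, hΔFle⟩

lemma step_descent (f g : E → ℝ) (L Lg ν θ η : ℝ)
    (hL : 0 < L) (hLg0 : 0 ≤ Lg) (hLgL : Lg ≤ L)
    (hθ0 : 0 < θ) (hθ1 : θ < 1) (hη : η = 1 / (8 * L))
    (hfd : Differentiable ℝ f) (hgd : Differentiable ℝ g)
    (hfconv : ConvexOn ℝ Set.univ f)
    (hglip : ∀ a b : E, ‖gradient g a - gradient g b‖ ≤ Lg * ‖a - b‖)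
    (hweak : ConvexOn ℝ Set.univ (fun w : E => g w + (ν / 2) * ‖w‖ ^ 2))
    (xkm xk xk1 zk : E)
    (hz : zk = xk + (1 - θ) • (xk - xkm))
    (hstep : (1 / η) • (zk - xk1) = gradient f xk1 + gradient g zk) :
    f xk1 + g xk1 ≤ f xk + g xk
      + (-(8 * L) + Lg + (8 * L - 2 * Lg) * (1 - θ) / 2) * ‖xk1 - xk‖ ^ 2
      + ((8 * L - 2 * Lg) * (1 - θ) / 2 + (Lg + ν / 2) * (1 - θ) ^ 2) * ‖xk - xkm‖ ^ 2 := by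
  have hLne : L ≠ 0 := ne_of_gt hL
  have hinvη : 1 / η = 8 * L := by rw [hη]; field_simp
  have h1 : f xk1 - f xk ≤ ⟪gradient f xk1, xk1 - xk⟫ := by
    have h := convex_grad_ineq_s6 f hfd hfconv xk1 xk
    have hrw : xk - xk1 = -(xk1 - xk) := by abel
    rw [hrw, inner_neg_right] at h
    linarith
  have h2 : g xk1 ≤ g zk + ⟪gradient g zk, xk1 - zk⟫ + Lg * ‖xk1 - zk‖ ^ 2 :=
    lipschitz_grad_upper g hgd hLg0 hglip zk xk1
  have h3 : g zk - g xk ≤ ⟪gradient g zk, zk - xk⟫ + (ν / 2) * ‖xk - zk‖ ^ 2 := by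
    have h := weak_grad_ineq g hgd hweak zk xk
    have hrw : ⟪gradient g zk, xk - zk⟫ = - ⟪gradient g zk, zk - xk⟫ := by
      rw [← inner_neg_right]; congr 1; abel
    rw [hrw] at h
    linarith
  have h4 : ⟪gradient g zk, xk1 - zk⟫ + ⟪gradient g zk, zk - xk⟫
      = ⟪gradient g zk, xk1 - xk⟫ := by
    rw [← inner_add_right]
    congr 1
    abel
  have h5 : ⟪gradient f xk1, xk1 - xk⟫ + ⟪gradient g zk, xk1 - xk⟫
      = (8 * L) * ⟪zk - xk1, xk1 - xk⟫ := by
    rw [← inner_add_left, ← hstep, hinvη, real_inner_smul_left]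
  have hzk : zk - xk1 = (1 - θ) • (xk - xkm) - (xk1 - xk) := by rw [hz]; module
  have hxz : xk1 - zk = (xk1 - xk) - (1 - θ) • (xk - xkm) := by rw [hz]; module
  have hkz : xk - zk = -((1 - θ) • (xk - xkm)) := by rw [hz]; module
  have h6 : ⟪zk - xk1, xk1 - xk⟫
      = (1 - θ) * ⟪xk - xkm, xk1 - xk⟫ - ‖xk1 - xk‖ ^ 2 := by
    rw [hzk, inner_sub_left, real_inner_smul_left, real_inner_self_eq_norm_sq]
  have h7 : ‖xk1 - zk‖ ^ 2 = ‖xk1 - xk‖ ^ 2 - 2 * (1 - θ) * ⟪xk1 - xk, xk - xkm⟫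
      + (1 - θ) ^ 2 * ‖xk - xkm‖ ^ 2 := by
    rw [hxz, norm_sub_sq_real, real_inner_smul_right, norm_smul, Real.norm_eq_abs,
      mul_pow, sq_abs]
    ring
  have h8 : ‖xk - zk‖ ^ 2 = (1 - θ) ^ 2 * ‖xk - xkm‖ ^ 2 := by
    rw [hkz, norm_neg, norm_smul, Real.norm_eq_abs, mul_pow, sq_abs]
  have h9 : ⟪xk - xkm, xk1 - xk⟫ ≤ (‖xk - xkm‖ ^ 2 + ‖xk1 - xk‖ ^ 2) / 2 := by
    have h0 : (0:ℝ) ≤ ‖(xk - xkm) - (xk1 - xk)‖ ^ 2 := sq_nonneg _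
    rw [norm_sub_sq_real] at h0
    linarith
  have hIc : ⟪xk1 - xk, xk - xkm⟫ = ⟪xk - xkm, xk1 - xk⟫ :=
    real_inner_comm (xk - xkm) (xk1 - xk)
  rw [hIc] at h7
  have hmain : f xk1 + g xk1 - (f xk + g xk)
      ≤ 8 * L * ((1 - θ) * ⟪xk - xkm, xk1 - xk⟫ - ‖xk1 - xk‖ ^ 2)
        + Lg * (‖xk1 - xk‖ ^ 2 - 2 * (1 - θ) * ⟪xk - xkm, xk1 - xk⟫
            + (1 - θ) ^ 2 * ‖xk - xkm‖ ^ 2)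
        + (ν / 2) * ((1 - θ) ^ 2 * ‖xk - xkm‖ ^ 2) := by
    rw [← h6, ← h5, ← h7, ← h8]
    linarith [h1, h2, h3, h4]
  have hco : 0 ≤ (8 * L - 2 * Lg) * (1 - θ) := by
    apply mul_nonneg _ (by linarith)
    linarith
  have hcross : (8 * L - 2 * Lg) * (1 - θ) * ⟪xk - xkm, xk1 - xk⟫
      ≤ (8 * L - 2 * Lg) * (1 - θ) * ((‖xk - xkm‖ ^ 2 + ‖xk1 - xk‖ ^ 2) / 2) :=
    mul_le_mul_of_nonneg_left h9 hco
  nlinarith [hmain, hcross]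

lemma epoch_descent (f g : E → ℝ) (L Lg ν θ η : ℝ)
    (hL : 0 < L) (hLg0 : 0 ≤ Lg) (hLgL : Lg ≤ L)
    (hθ0 : 0 < θ) (hθ1 : θ < 1) (hη : η = 1 / (8 * L)) (hν : ν ≤ 6 * L * θ)
    (hfd : Differentiable ℝ f) (hgd : Differentiable ℝ g)
    (hfconv : ConvexOn ℝ Set.univ f)
    (hglip : ∀ a b : E, ‖gradient g a - gradient g b‖ ≤ Lg * ‖a - b‖)
    (hweak : ConvexOn ℝ Set.univ (fun w : E => g w + (ν / 2) * ‖w‖ ^ 2))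
    (x z : ℕ → E)
    (hz : ∀ k, z k = x k + (1 - θ) • (x k - x (k - 1)))
    (hstep : ∀ k, (1 / η) • (z k - x (k + 1)) = gradient f (x (k + 1)) + gradient g (z k))
    (len : ℕ) :
    f (x len) + g (x len) ≤ f (x 0) + g (x 0)
      - (2 * L * θ) * ∑ t ∈ Finset.range len, ‖x (t + 1) - x t‖ ^ 2 := by
  obtain ⟨A, hA⟩ : ∃ A : ℝ, A = -(8 * L) + Lg + (8 * L - 2 * Lg) * (1 - θ) / 2 := ⟨_, rfl⟩
  obtain ⟨B2, hB2⟩ : ∃ B2 : ℝ,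
      B2 = (8 * L - 2 * Lg) * (1 - θ) / 2 + (Lg + ν / 2) * (1 - θ) ^ 2 := ⟨_, rfl⟩
  have hstep' : ∀ k, f (x (k + 1)) + g (x (k + 1)) ≤ f (x k) + g (x k)
      + A * ‖x (k + 1) - x k‖ ^ 2 + B2 * ‖x k - x (k - 1)‖ ^ 2 := by
    intro k
    rw [hA, hB2]
    exact step_descent f g L Lg ν θ η hL hLg0 hLgL hθ0 hθ1 hη hfd hgd hfconv hglip hweak
      (x (k - 1)) (x k) (x (k + 1)) (z k) (hz k) (hstep k)
  have htele : f (x len) + g (x len) - (f (x 0) + g (x 0))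
      = ∑ k ∈ Finset.range len, ((f (x (k+1)) + g (x (k+1))) - (f (x k) + g (x k))) := by
    rw [Finset.sum_range_sub (fun k => f (x k) + g (x k)) len]
  have hsum1 : f (x len) + g (x len) - (f (x 0) + g (x 0))
      ≤ A * (∑ t ∈ Finset.range len, ‖x (t + 1) - x t‖ ^ 2)
        + B2 * (∑ t ∈ Finset.range len, ‖x t - x (t - 1)‖ ^ 2) := by
    rw [htele, Finset.mul_sum, Finset.mul_sum, ← Finset.sum_add_distrib]
    apply Finset.sum_le_sum
    intro k _
    linarith [hstep' k]
  have hW : (∑ t ∈ Finset.range len, ‖x t - x (t - 1)‖ ^ 2)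
      ≤ ∑ t ∈ Finset.range len, ‖x (t + 1) - x t‖ ^ 2 := by
    cases len with
    | zero => simp
    | succ m =>
      rw [Finset.sum_range_succ' (fun t => ‖x t - x (t - 1)‖ ^ 2) m]
      simp only [Nat.add_sub_cancel, Nat.zero_sub, sub_self, norm_zero]
      norm_num
      apply Finset.sum_le_sum_of_subset_of_nonneg
      · exact Finset.range_subset_range.2 (Nat.le_succ m)
      · intro t _ _; positivity
  obtain ⟨S, hS⟩ : ∃ S : ℝ, S = ∑ t ∈ Finset.range len, ‖x (t + 1) - x t‖ ^ 2 := ⟨_, rfl⟩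
  obtain ⟨W, hWd⟩ : ∃ W : ℝ, W = ∑ t ∈ Finset.range len, ‖x t - x (t - 1)‖ ^ 2 := ⟨_, rfl⟩
  rw [← hS, ← hWd] at hsum1
  rw [← hS, ← hWd] at hW
  rw [← hS]
  have hS0 : 0 ≤ S := by
    rw [hS]; apply Finset.sum_nonneg; intro t _; positivity
  have hW0 : 0 ≤ W := by
    rw [hWd]; apply Finset.sum_nonneg; intro t _; positivity
  have hAB : A + B2 ≤ -(2 * L * θ) := by
    rw [hA, hB2]
    nlinarith [hν, mul_pos hL hθ0, sq_nonneg (1 - θ), mul_nonneg hLg0 (sq_nonneg θ),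
      mul_nonneg (mul_nonneg hL.le hθ0.le) (sq_nonneg (1-θ)), mul_pos (mul_pos hL hθ0) hθ0]
  have hA2 : A ≤ -(2 * L * θ) := by
    rw [hA]
    nlinarith [mul_pos hL hθ0, mul_pos hL (sub_pos.2 hθ1)]
  rcases le_or_gt 0 B2 with hB0 | hB0
  · have h1 : B2 * W ≤ B2 * S := mul_le_mul_of_nonneg_left hW hB0
    have h2 : (A + B2) * S ≤ -(2 * L * θ) * S := mul_le_mul_of_nonneg_right hAB hS0
    nlinarith [hsum1, h1, h2]
  · have h1 : B2 * W ≤ 0 := mul_nonpos_of_nonpos_of_nonneg hB0.le hW0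
    have h2 : A * S ≤ -(2 * L * θ) * S := mul_le_mul_of_nonneg_right hA2 hS0
    linarith [hsum1, h1, h2]

lemma norm_sub5 {E : Type*} [NormedAddCommGroup E] (a b c d e : E) :
    ‖a - b - c - d - e‖ ≤ ‖a‖ + ‖b‖ + ‖c‖ + ‖d‖ + ‖e‖ := by
  calc ‖a - b - c - d - e‖ ≤ ‖a - b - c - d‖ + ‖e‖ := norm_sub_le _ _
    _ ≤ (‖a - b - c‖ + ‖d‖) + ‖e‖ := by linarith [norm_sub_le (a - b - c) d]
    _ ≤ ((‖a - b‖ + ‖c‖) + ‖d‖) + ‖e‖ := by linarith [norm_sub_le (a - b) c]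
    _ ≤ (((‖a‖ + ‖b‖) + ‖c‖) + ‖d‖) + ‖e‖ := by linarith [norm_sub_le a b]
    _ = ‖a‖ + ‖b‖ + ‖c‖ + ‖d‖ + ‖e‖ := by ring

lemma sq_le_imp {a c : ℝ} (h : a^2 ≤ c^2) (ha : 0 ≤ a) (hc : 0 ≤ c) : a ≤ c := by
  nlinarith

lemma helper142 {θ B d : ℝ} (hθ : 0 ≤ θ) (hB : 0 ≤ B) (hd : 0 ≤ d)
    (h : d^2 ≤ 2*θ^2*B^2) : d ≤ 1.42*θ*B := by
  nlinarith [sq_nonneg (θ*B), mul_nonneg hθ hB]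

lemma helper386 {B d : ℝ} (hB : 0 ≤ B) (hd : 0 ≤ d) (h : d^2 ≤ (4/27)*B^2) :
    d ≤ 0.386*B := by
  nlinarith

lemma helperq {θ : ℝ} (h0 : 0 < θ) (h1 : θ < 1) : (1-θ)^2*θ ≤ 4/27 := by
  nlinarith [mul_nonneg (sq_nonneg (θ-1/3)) (by linarith : (0:ℝ) ≤ 4/3 - θ)]

lemma final_epoch (f g : E → ℝ) (L Lf Lg ρf ρg ρ ε B θ η : ℝ) (K K₀ : ℕ)
    (hL : 0 < L) (hLf0 : 0 ≤ Lf) (hLfL : Lf ≤ L)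
    (hρf0 : 0 ≤ ρf) (hρg0 : 0 ≤ ρg) (hρdef : ρ = ρf + ρg)
    (hB0 : 0 < B) (hθ0 : 0 < θ) (hθ1 : θ < 1) (hη : η = 1 / (8 * L))
    (hεLB : ε = L * B * θ ^ 2) (hε4 : 4 * ρ * B ^ 2 = ε)
    (hK2 : 2 ≤ K) (hKθ : (K : ℝ) = θ⁻¹)
    (hfd2 : Differentiable ℝ (gradient f)) (hgd2 : Differentiable ℝ (gradient g))
    (hflip : ∀ a b : E, ‖gradient f a - gradient f b‖ ≤ Lf * ‖a - b‖)
    (hfHess : ∀ a b : E, ‖fderiv ℝ (gradient f) a - fderiv ℝ (gradient f) b‖ ≤ ρf * ‖a - b‖)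
    (hgHess : ∀ a b : E, ‖fderiv ℝ (gradient g) a - fderiv ℝ (gradient g) b‖ ≤ ρg * ‖a - b‖)
    (x z : ℕ → E)
    (hz : ∀ k, z k = x k + (1 - θ) • (x k - x (k - 1)))
    (hstep : ∀ k, (1 / η) • (z k - x (k + 1)) = gradient f (x (k + 1)) + gradient g (z k))
    (hfinal : ∀ k, 1 ≤ k → k ≤ K →
      (k : ℝ) * ∑ t ∈ Finset.range k, ‖x (t + 1) - x t‖ ^ 2 ≤ B ^ 2)
    (hK₀lb : K / 2 ≤ K₀) (hK₀ub : K₀ ≤ K - 1)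
    (hK₀min : ∀ k, K / 2 ≤ k → k ≤ K - 1 → ‖x (K₀ + 1) - x K₀‖ ≤ ‖x (k + 1) - x k‖)
    (zhat : E) (hzhat : zhat = ((K₀ : ℝ) + 1)⁻¹ • ∑ k ∈ Finset.range (K₀ + 1), z k) :
    ‖gradient f zhat + gradient g zhat‖ ≤ 45 * ε := by
  have hLne : L ≠ 0 := ne_of_gt hL
  have hinvη : 1 / η = 8 * L := by rw [hη]; field_simp
  have hθK : θ = (K : ℝ)⁻¹ := by
    rw [hKθ, inv_inv]
  have hK0R : (0:ℝ) < (K:ℝ) := by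
    have : (0:ℕ) < K := by omega
    exact_mod_cast this
  have hKK₀ : K₀ + 1 ≤ K := by omega
  have hε0 : 0 < ε := by rw [hεLB]; positivity
  set M : ℕ := K₀ + 1 with hM
  have hM0 : 0 < M := Nat.succ_pos _
  have hMR : (0:ℝ) < (M:ℝ) := by exact_mod_cast hM0
  have hMcast : ((K₀ : ℝ) + 1) = (M:ℝ) := by rw [hM]; push_cast; ring
  rw [hMcast] at hzhat
  -- (M:ℝ)⁻¹ ≤ 2θ
  have hMinv : (M:ℝ)⁻¹ ≤ 2 * θ := by
    have h1 : K ≤ 2 * K₀ + 1 := by omega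
    have h2 : θ⁻¹ ≤ 2 * (M:ℝ) := by
      rw [← hKθ]
      have h1R : (K:ℝ) ≤ 2 * (K₀:ℝ) + 1 := by exact_mod_cast h1
      rw [hM]; push_cast; linarith
    have h3 : (2 * (M:ℝ))⁻¹ ≤ θ := by
      rw [← inv_inv θ]
      exact inv_anti₀ (by positivity) h2
    have h4 : (M:ℝ)⁻¹ = 2 * (2 * (M:ℝ))⁻¹ := by
      rw [mul_inv]
      ring
    rw [h4]
    linarith
  -- total movement bound : ‖x j - x i‖ ≤ B for i ≤ j ≤ K
  have hxij : ∀ i j : ℕ, i ≤ j → j ≤ K → ‖x j - x i‖ ≤ B := by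
    intro i j hij hjK
    rcases Nat.eq_or_lt_of_le hij with h | h
    · subst h; simp [hB0.le]
    have hj1 : 1 ≤ j := by omega
    have htelij : x j - x i = ∑ t ∈ Finset.Ico i j, (x (t + 1) - x t) := by
      rw [Finset.sum_Ico_eq_sub _ hij]
      rw [Finset.sum_range_sub (fun t => x t), Finset.sum_range_sub (fun t => x t)]
      abel
    have hnorm : ‖x j - x i‖ ≤ ∑ t ∈ Finset.Ico i j, ‖x (t + 1) - x t‖ := by
      rw [htelij]
      exact norm_sum_le _ _
    have hcs : (∑ t ∈ Finset.Ico i j, ‖x (t + 1) - x t‖) ^ 2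
        ≤ ((Finset.Ico i j).card : ℝ) * ∑ t ∈ Finset.Ico i j, ‖x (t + 1) - x t‖ ^ 2 := by
      have := sq_sum_le_card_mul_sum_sq (s := Finset.Ico i j)
        (f := fun t => ‖x (t + 1) - x t‖)
      exact_mod_cast this
    have hsub : ∑ t ∈ Finset.Ico i j, ‖x (t + 1) - x t‖ ^ 2
        ≤ ∑ t ∈ Finset.range j, ‖x (t + 1) - x t‖ ^ 2 := by
      apply Finset.sum_le_sum_of_subset_of_nonneg
      · intro t ht
        simp only [Finset.mem_Ico] at ht
        simp only [Finset.mem_range]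
        exact ht.2
      · intro t _ _; positivity
    have hcard : ((Finset.Ico i j).card : ℝ) ≤ (j:ℝ) := by
      rw [Nat.card_Ico]
      exact_mod_cast Nat.sub_le j i
    have hfin := hfinal j hj1 hjK
    have hsq : (∑ t ∈ Finset.Ico i j, ‖x (t + 1) - x t‖) ^ 2 ≤ B ^ 2 := by
      have hs0 : 0 ≤ ∑ t ∈ Finset.range j, ‖x (t + 1) - x t‖ ^ 2 := by
        apply Finset.sum_nonneg; intro t _; positivity
      calc (∑ t ∈ Finset.Ico i j, ‖x (t + 1) - x t‖) ^ 2
          ≤ ((Finset.Ico i j).card : ℝ) * ∑ t ∈ Finset.Ico i j, ‖x (t + 1) - x t‖ ^ 2 := hcs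
        _ ≤ (j:ℝ) * ∑ t ∈ Finset.range j, ‖x (t + 1) - x t‖ ^ 2 := by
            apply mul_le_mul hcard hsub (Finset.sum_nonneg (fun t _ => by positivity))
              (by positivity)
        _ ≤ B ^ 2 := hfin
    have hsum0 : 0 ≤ ∑ t ∈ Finset.Ico i j, ‖x (t + 1) - x t‖ := by
      apply Finset.sum_nonneg; intro t _; positivity
    exact le_trans hnorm (sq_le_imp hsq hsum0 hB0.le)
  have hxij' : ∀ i j : ℕ, i ≤ K → j ≤ K → ‖x j - x i‖ ≤ B := by
    intro i j hiK hjK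
    rcases le_total i j with h | h
    · exact hxij i j h hjK
    · rw [norm_sub_rev]; exact hxij j i h hiK
  -- per-step bound
  have hSK : ∑ t ∈ Finset.range K, ‖x (t + 1) - x t‖ ^ 2 ≤ θ * B ^ 2 := by
    have hfin := hfinal K (by omega) le_rfl
    rw [hθK, inv_mul_eq_div, le_div_iff₀ hK0R]
    linarith [hfin]
  have hdsq : ∀ t, t < K → ‖x (t + 1) - x t‖ ^ 2 ≤ θ * B ^ 2 := by
    intro t ht
    have h1 : ‖x (t + 1) - x t‖ ^ 2 ≤ ∑ s ∈ Finset.range K, ‖x (s + 1) - x s‖ ^ 2 := by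
      apply Finset.single_le_sum (f := fun s => ‖x (s + 1) - x s‖ ^ 2)
        (fun s _ => by positivity)
      exact Finset.mem_range.2 ht
    linarith [hSK]
  -- d_{K₀} bound
  have hdK₀ : ‖x (K₀ + 1) - x K₀‖ ^ 2 ≤ 2 * θ ^ 2 * B ^ 2 := by
    set a : ℕ := K / 2 with ha
    have hcard : (Finset.Ico a K).card = K - a := Nat.card_Ico a K
    have hbound : ∀ k ∈ Finset.Ico a K, ‖x (K₀ + 1) - x K₀‖ ^ 2 ≤ ‖x (k + 1) - x k‖ ^ 2 := by
      intro k hk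
      simp only [Finset.mem_Ico] at hk
      have := hK₀min k hk.1 (by omega)
      exact pow_le_pow_left₀ (norm_nonneg _) this 2
    have h1 : ((K - a : ℕ) : ℝ) * ‖x (K₀ + 1) - x K₀‖ ^ 2
        ≤ ∑ k ∈ Finset.Ico a K, ‖x (k + 1) - x k‖ ^ 2 := by
      have := Finset.card_nsmul_le_sum (Finset.Ico a K)
        (fun k => ‖x (k + 1) - x k‖ ^ 2) (‖x (K₀ + 1) - x K₀‖ ^ 2) hbound
      rw [hcard] at this
      rw [← nsmul_eq_mul]
      exact this
    have h2 : ∑ k ∈ Finset.Ico a K, ‖x (k + 1) - x k‖ ^ 2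
        ≤ ∑ k ∈ Finset.range K, ‖x (k + 1) - x k‖ ^ 2 := by
      apply Finset.sum_le_sum_of_subset_of_nonneg
      · intro t ht; simp only [Finset.mem_Ico] at ht; exact Finset.mem_range.2 ht.2
      · intro t _ _; positivity
    have h3 : ((K - a : ℕ) : ℝ) ≥ (K:ℝ) / 2 := by
      have : 2 * (K - a) ≥ K := by omega
      have h4 : (2:ℝ) * ((K - a : ℕ):ℝ) ≥ (K:ℝ) := by exact_mod_cast this
      linarith
    have h5 : (K:ℝ)/2 * ‖x (K₀ + 1) - x K₀‖ ^ 2 ≤ θ * B ^ 2 := by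
      calc (K:ℝ)/2 * ‖x (K₀ + 1) - x K₀‖ ^ 2
          ≤ ((K - a : ℕ) : ℝ) * ‖x (K₀ + 1) - x K₀‖ ^ 2 := by
            apply mul_le_mul_of_nonneg_right h3 (by positivity)
        _ ≤ ∑ k ∈ Finset.Ico a K, ‖x (k + 1) - x k‖ ^ 2 := h1
        _ ≤ ∑ k ∈ Finset.range K, ‖x (k + 1) - x k‖ ^ 2 := h2
        _ ≤ θ * B ^ 2 := hSK
    have hKR : (K:ℝ) = θ⁻¹ := hKθ
    rw [hKR] at h5
    have h6 : ‖x (K₀ + 1) - x K₀‖ ^ 2 ≤ 2 * θ * (θ * B ^ 2) := by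
      have h7 := mul_le_mul_of_nonneg_left h5 (by positivity : (0:ℝ) ≤ 2 * θ)
      have h8 : 2 * θ * (θ⁻¹ / 2 * ‖x (K₀ + 1) - x K₀‖ ^ 2) = ‖x (K₀ + 1) - x K₀‖ ^ 2 := by
        have hθne : θ ≠ 0 := ne_of_gt hθ0
        field_simp
      rw [h8] at h7
      exact h7
    linarith [h6]
  -- telescoping
  have htel : ∑ k ∈ Finset.range M, (z k - x (k + 1))
      = (x K₀ - x (K₀ + 1)) + θ • (x 0 - x K₀) := by
    have hzz : ∀ k, z k - x (k + 1)
        = (x k - x (k + 1)) + (1 - θ) • (x k - x (k - 1)) := by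
      intro k; rw [hz k]; abel
    rw [Finset.sum_congr rfl (fun k _ => hzz k), Finset.sum_add_distrib, ← Finset.smul_sum]
    have e1 : ∑ k ∈ Finset.range M, (x k - x (k + 1)) = x 0 - x M := by
      rw [Finset.sum_range_sub' (fun k => x k) M]
    have e2 : ∑ k ∈ Finset.range M, (x k - x (k - 1)) = x K₀ - x 0 := by
      rw [hM, Finset.sum_range_succ' (fun k => x k - x (k - 1)) K₀]
      simp only [Nat.add_sub_cancel, Nat.zero_sub, sub_self]
      rw [Finset.sum_range_sub (fun k => x k) K₀]
      abel
    rw [e1, e2, hM]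
    rw [sub_smul, one_smul, smul_sub, smul_sub]
    abel
  -- bound on ‖T‖
  have hdK₀' : ‖x (K₀ + 1) - x K₀‖ ≤ 1.42 * θ * B :=
    helper142 hθ0.le hB0.le (norm_nonneg _) hdK₀
  have hT : ‖∑ k ∈ Finset.range M, (z k - x (k + 1))‖ ≤ 2.42 * θ * B := by
    rw [htel]
    have t1 : ‖x K₀ - x (K₀ + 1)‖ ≤ 1.42 * θ * B := by
      rw [norm_sub_rev]; exact hdK₀'
    have t2 : ‖θ • (x 0 - x K₀)‖ ≤ θ * B := by
      rw [norm_smul, Real.norm_eq_abs, abs_of_pos hθ0]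
      apply mul_le_mul_of_nonneg_left _ hθ0.le
      exact hxij' K₀ 0 (by omega) (by omega)
    calc ‖(x K₀ - x (K₀ + 1)) + θ • (x 0 - x K₀)‖
        ≤ ‖x K₀ - x (K₀ + 1)‖ + ‖θ • (x 0 - x K₀)‖ := norm_add_le _ _
      _ ≤ 1.42 * θ * B + θ * B := add_le_add t1 t2
      _ = 2.42 * θ * B := by ring
  -- inertial term bound : (1-θ)‖x j - x (j-1)‖ ≤ 0.386 B for j ≤ K₀
  have hstepb : ∀ j, j ≤ K₀ → (1 - θ) * ‖x j - x (j - 1)‖ ≤ 0.386 * B := by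
    intro j hj
    cases j with
    | zero =>
      simp only [Nat.zero_sub, sub_self, norm_zero, mul_zero]
      positivity
    | succ m =>
      have hmK : m + 1 ≤ K := by omega
      have hd := hdsq m (by omega)
      simp only [Nat.add_sub_cancel]
      have hq : (1 - θ) ^ 2 * θ ≤ 4 / 27 := helperq hθ0 hθ1
      have hn0 : 0 ≤ ‖x (m + 1) - x m‖ := norm_nonneg _
      have hsq : ((1 - θ) * ‖x (m + 1) - x m‖) ^ 2 ≤ (4/27) * B ^ 2 := by
        have h1 : ((1 - θ) * ‖x (m + 1) - x m‖) ^ 2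
            = (1 - θ) ^ 2 * ‖x (m + 1) - x m‖ ^ 2 := by ring
        rw [h1]
        calc (1 - θ) ^ 2 * ‖x (m + 1) - x m‖ ^ 2 ≤ (1 - θ) ^ 2 * (θ * B ^ 2) := by
              apply mul_le_mul_of_nonneg_left hd (sq_nonneg _)
          _ = ((1 - θ) ^ 2 * θ) * B ^ 2 := by ring
          _ ≤ (4/27) * B ^ 2 := by
              apply mul_le_mul_of_nonneg_right hq (sq_nonneg _)
      exact helper386 hB0.le (mul_nonneg (by linarith : (0:ℝ) ≤ 1 - θ) hn0) hsq
  -- distances to zhat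
  have havg : ∀ (c : E) (R : ℝ), 0 ≤ R → (∀ j ∈ Finset.range M, ‖z j - c‖ ≤ R)
      → ‖zhat - c‖ ≤ R := by
    intro c R hR hj
    have he : zhat - c = (M:ℝ)⁻¹ • (∑ j ∈ Finset.range M, (z j - c)) := by
      rw [hzhat, Finset.sum_sub_distrib, Finset.sum_const, Finset.card_range, smul_sub]
      congr 1
      rw [← Nat.cast_smul_eq_nsmul ℝ M c, smul_smul, inv_mul_cancel₀ (ne_of_gt hMR), one_smul]
    rw [he, norm_smul, Real.norm_eq_abs, abs_of_pos (by positivity : (0:ℝ) < (M:ℝ)⁻¹)]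
    have h1 : ‖∑ j ∈ Finset.range M, (z j - c)‖ ≤ (M:ℝ) * R := by
      calc ‖∑ j ∈ Finset.range M, (z j - c)‖ ≤ ∑ j ∈ Finset.range M, ‖z j - c‖ :=
            norm_sum_le _ _
        _ ≤ ∑ j ∈ Finset.range M, R := Finset.sum_le_sum hj
        _ = (M:ℝ) * R := by rw [Finset.sum_const, Finset.card_range, nsmul_eq_mul]
    calc (M:ℝ)⁻¹ * ‖∑ j ∈ Finset.range M, (z j - c)‖ ≤ (M:ℝ)⁻¹ * ((M:ℝ) * R) := by
          apply mul_le_mul_of_nonneg_left h1 (by positivity)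
      _ = R := by field_simp
  have hzj : ∀ j, j ≤ K₀ → ∀ c : E, ‖x j - c‖ ≤ B → ‖z j - c‖ ≤ 1.386 * B := by
    intro j hj c hc
    have he : z j - c = (x j - c) + (1 - θ) • (x j - x (j - 1)) := by rw [hz j]; abel
    rw [he]
    calc ‖(x j - c) + (1 - θ) • (x j - x (j - 1))‖
        ≤ ‖x j - c‖ + ‖(1 - θ) • (x j - x (j - 1))‖ := norm_add_le _ _
      _ ≤ B + 0.386 * B := by
          apply add_le_add hc
          rw [norm_smul, Real.norm_eq_abs, abs_of_pos (by linarith : (0:ℝ) < 1 - θ)]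
          exact hstepb j hj
      _ = 1.386 * B := by ring
  have hxz : ∀ k ∈ Finset.range M, ‖x (k + 1) - zhat‖ ≤ 1.386 * B := by
    intro k hk
    simp only [Finset.mem_range, hM] at hk
    rw [norm_sub_rev]
    apply havg _ _ (by positivity)
    intro j hjm
    simp only [Finset.mem_range, hM] at hjm
    exact hzj j (by omega) _ (hxij' (k + 1) j (by omega) (by omega))
  have hzz : ∀ k ∈ Finset.range M, ‖z k - zhat‖ ≤ 1.772 * B := by
    intro k hk
    simp only [Finset.mem_range, hM] at hk
    rw [norm_sub_rev]
    apply havg _ _ (by positivity)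
    intro j hjm
    simp only [Finset.mem_range, hM] at hjm
    have he : z j - z k = ((x j - x k) + (1 - θ) • (x j - x (j - 1)))
        - (1 - θ) • (x k - x (k - 1)) := by
      rw [hz j, hz k]; abel
    rw [he]
    calc ‖((x j - x k) + (1 - θ) • (x j - x (j - 1))) - (1 - θ) • (x k - x (k - 1))‖
        ≤ ‖(x j - x k) + (1 - θ) • (x j - x (j - 1))‖
          + ‖(1 - θ) • (x k - x (k - 1))‖ := norm_sub_le _ _
      _ ≤ (‖x j - x k‖ + ‖(1 - θ) • (x j - x (j - 1))‖) + 0.386 * B := by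
          apply add_le_add (norm_add_le _ _)
          rw [norm_smul, Real.norm_eq_abs, abs_of_pos (by linarith : (0:ℝ) < 1 - θ)]
          exact hstepb k (by omega)
      _ ≤ (B + 0.386 * B) + 0.386 * B := by
          apply add_le_add _ le_rfl
          apply add_le_add (hxij' k j (by omega) (by omega))
          rw [norm_smul, Real.norm_eq_abs, abs_of_pos (by linarith : (0:ℝ) < 1 - θ)]
          exact hstepb j (by omega)
      _ = 1.772 * B := by ring
  -- gradient decomposition
  set G := gradient f with hG
  set H := gradient g with hHdef
  set Hf := fderiv ℝ G zhat with hHf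
  set Hg := fderiv ℝ H zhat with hHg
  have hef : ∀ k, ‖G (x (k + 1)) - G zhat - Hf (x (k + 1) - zhat)‖
      ≤ ρf * ‖x (k + 1) - zhat‖ ^ 2 := fun k =>
    hess_taylor G hfd2 hρf0 hfHess zhat (x (k + 1))
  have heg : ∀ k, ‖H (z k) - H zhat - Hg (z k - zhat)‖ ≤ ρg * ‖z k - zhat‖ ^ 2 := fun k =>
    hess_taylor H hgd2 hρg0 hgHess zhat (z k)
  have hsumz : ∑ k ∈ Finset.range M, z k = (M:ℝ) • zhat := by
    rw [hzhat, smul_smul, mul_inv_cancel₀ (ne_of_gt hMR), one_smul]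
  -- main vector identity
  have hkey : (M:ℝ) • (G zhat + H zhat)
      = (8 * L) • (∑ k ∈ Finset.range M, (z k - x (k + 1)))
        - Hf (∑ k ∈ Finset.range M, (x (k + 1) - zhat))
        - (∑ k ∈ Finset.range M, (G (x (k + 1)) - G zhat - Hf (x (k + 1) - zhat)))
        - (∑ k ∈ Finset.range M, (H (z k) - H zhat - Hg (z k - zhat)))
        - Hg (∑ k ∈ Finset.range M, (z k - zhat)) := by
    have hGH : ∀ k, G (x (k + 1)) + H (z k) = (8 * L) • (z k - x (k + 1)) := by
      intro k
      rw [hG, hHdef, ← hstep k, hinvη]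
    have hsum : ∑ k ∈ Finset.range M, (G (x (k + 1)) + H (z k))
        = (8 * L) • (∑ k ∈ Finset.range M, (z k - x (k + 1))) := by
      rw [Finset.sum_congr rfl (fun k _ => hGH k), ← Finset.smul_sum]
    have hHfsum : Hf (∑ k ∈ Finset.range M, (x (k + 1) - zhat))
        = ∑ k ∈ Finset.range M, Hf (x (k + 1) - zhat) := map_sum Hf _ _
    have hHgsum : Hg (∑ k ∈ Finset.range M, (z k - zhat))
        = ∑ k ∈ Finset.range M, Hg (z k - zhat) := map_sum Hg _ _
    have hsplit : ∑ k ∈ Finset.range M, (G (x (k + 1)) + H (z k))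
        = (M:ℝ) • (G zhat + H zhat)
          + Hf (∑ k ∈ Finset.range M, (x (k + 1) - zhat))
          + (∑ k ∈ Finset.range M, (G (x (k + 1)) - G zhat - Hf (x (k + 1) - zhat)))
          + (∑ k ∈ Finset.range M, (H (z k) - H zhat - Hg (z k - zhat)))
          + Hg (∑ k ∈ Finset.range M, (z k - zhat)) := by
      have hconst : (M:ℝ) • (G zhat + H zhat)
          = ∑ _k ∈ Finset.range M, (G zhat + H zhat) := by
        rw [Finset.sum_const, Finset.card_range, Nat.cast_smul_eq_nsmul]
      rw [hHfsum, hHgsum, hconst, ← Finset.sum_add_distrib, ← Finset.sum_add_distrib,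
        ← Finset.sum_add_distrib, ← Finset.sum_add_distrib]
      apply Finset.sum_congr rfl
      intro k _
      abel
    rw [hsplit] at hsum
    rw [← hsum]
    abel
  -- norms
  have hT' : ∑ k ∈ Finset.range M, (x (k + 1) - zhat)
      = -(∑ k ∈ Finset.range M, (z k - x (k + 1))) := by
    rw [Finset.sum_sub_distrib, Finset.sum_const, Finset.card_range,
      ← Nat.cast_smul_eq_nsmul ℝ M zhat, ← hsumz, Finset.sum_sub_distrib]
    abel
  have hZ0 : ∑ k ∈ Finset.range M, (z k - zhat) = 0 := by
    rw [Finset.sum_sub_distrib, Finset.sum_const, Finset.card_range,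
      ← Nat.cast_smul_eq_nsmul ℝ M zhat, ← hsumz]
    abel
  have hHfle : ‖Hf‖ ≤ Lf := opnorm_fderiv_le G hLf0 hflip zhat
  have hbef : ‖∑ k ∈ Finset.range M, (G (x (k + 1)) - G zhat - Hf (x (k + 1) - zhat))‖
      ≤ (M:ℝ) * (ρf * (1.386 * B) ^ 2) := by
    calc ‖∑ k ∈ Finset.range M, (G (x (k + 1)) - G zhat - Hf (x (k + 1) - zhat))‖
        ≤ ∑ k ∈ Finset.range M, ‖G (x (k + 1)) - G zhat - Hf (x (k + 1) - zhat)‖ :=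
          norm_sum_le _ _
      _ ≤ ∑ _k ∈ Finset.range M, (ρf * (1.386 * B) ^ 2) := by
          apply Finset.sum_le_sum
          intro k hk
          refine (hef k).trans ?_
          apply mul_le_mul_of_nonneg_left _ hρf0
          exact pow_le_pow_left₀ (norm_nonneg _) (hxz k hk) 2
      _ = (M:ℝ) * (ρf * (1.386 * B) ^ 2) := by
          rw [Finset.sum_const, Finset.card_range, nsmul_eq_mul]
  have hbeg : ‖∑ k ∈ Finset.range M, (H (z k) - H zhat - Hg (z k - zhat))‖
      ≤ (M:ℝ) * (ρg * (1.772 * B) ^ 2) := by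
    calc ‖∑ k ∈ Finset.range M, (H (z k) - H zhat - Hg (z k - zhat))‖
        ≤ ∑ k ∈ Finset.range M, ‖H (z k) - H zhat - Hg (z k - zhat)‖ := norm_sum_le _ _
      _ ≤ ∑ _k ∈ Finset.range M, (ρg * (1.772 * B) ^ 2) := by
          apply Finset.sum_le_sum
          intro k hk
          refine (heg k).trans ?_
          apply mul_le_mul_of_nonneg_left _ hρg0
          exact pow_le_pow_left₀ (norm_nonneg _) (hzz k hk) 2
      _ = (M:ℝ) * (ρg * (1.772 * B) ^ 2) := by
          rw [Finset.sum_const, Finset.card_range, nsmul_eq_mul]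
  have hmain : (M:ℝ) * ‖G zhat + H zhat‖
      ≤ (8 * L + Lf) * (2.42 * θ * B) + (M:ℝ) * (ρf * (1.386 * B) ^ 2)
        + (M:ℝ) * (ρg * (1.772 * B) ^ 2) := by
    have hnorm1 : ‖(M:ℝ) • (G zhat + H zhat)‖ = (M:ℝ) * ‖G zhat + H zhat‖ := by
      rw [norm_smul, Real.norm_eq_abs, abs_of_pos hMR]
    rw [← hnorm1, hkey]
    have t1 : ‖(8 * L) • (∑ k ∈ Finset.range M, (z k - x (k + 1)))‖ ≤ 8 * L * (2.42 * θ * B) := by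
      rw [norm_smul, Real.norm_eq_abs, abs_of_pos (by linarith : (0:ℝ) < 8 * L)]
      exact mul_le_mul_of_nonneg_left hT (by linarith)
    have t2 : ‖Hf (∑ k ∈ Finset.range M, (x (k + 1) - zhat))‖ ≤ Lf * (2.42 * θ * B) := by
      calc ‖Hf (∑ k ∈ Finset.range M, (x (k + 1) - zhat))‖
          ≤ ‖Hf‖ * ‖∑ k ∈ Finset.range M, (x (k + 1) - zhat)‖ :=
            Hf.le_opNorm _
        _ ≤ Lf * (2.42 * θ * B) := by
            apply mul_le_mul hHfle _ (norm_nonneg _) hLf0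
            rw [hT', norm_neg]
            exact hT
    have t3 : ‖Hg (∑ k ∈ Finset.range M, (z k - zhat))‖ = 0 := by
      rw [hZ0, map_zero, norm_zero]
    refine (norm_sub5 _ _ _ _ _).trans ?_
    rw [t3]
    linarith [t1, t2, hbef, hbeg]
  -- divide by M and conclude
  have hdiv : ‖G zhat + H zhat‖
      ≤ (M:ℝ)⁻¹ * ((8 * L + Lf) * (2.42 * θ * B)) + ρf * (1.386 * B) ^ 2
        + ρg * (1.772 * B) ^ 2 := by
    have h1 := mul_le_mul_of_nonneg_left hmain (by positivity : (0:ℝ) ≤ (M:ℝ)⁻¹)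
    have h2 : (M:ℝ)⁻¹ * ((M:ℝ) * ‖G zhat + H zhat‖) = ‖G zhat + H zhat‖ := by
      field_simp
    rw [h2, mul_add, mul_add] at h1
    have h3 : (M:ℝ)⁻¹ * ((M:ℝ) * (ρf * (1.386 * B) ^ 2)) = ρf * (1.386 * B) ^ 2 := by
      field_simp
    have h4 : (M:ℝ)⁻¹ * ((M:ℝ) * (ρg * (1.772 * B) ^ 2)) = ρg * (1.772 * B) ^ 2 := by
      field_simp
    rw [h3, h4] at h1
    linarith
  have e1 : (M:ℝ)⁻¹ * ((8 * L + Lf) * (2.42 * θ * B)) ≤ 2 * θ * (9 * L * (2.42 * θ * B)) := by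
    apply mul_le_mul hMinv _ (by positivity) (by positivity)
    apply mul_le_mul_of_nonneg_right (by linarith) (by positivity)
  have e2 : 2 * θ * (9 * L * (2.42 * θ * B)) = 43.56 * ε := by
    rw [hεLB]; ring
  have e3 : ρf * (1.386 * B) ^ 2 + ρg * (1.772 * B) ^ 2 ≤ ρ * (3.14 * B ^ 2) := by
    rw [hρdef]
    linarith [mul_nonneg hρf0 (sq_nonneg B), mul_nonneg hρg0 (sq_nonneg B)]
  have e4 : ρ * (3.14 * B ^ 2) = 0.785 * ε := by
    rw [← hε4]; ring
  rw [hG, hHdef] at hdiv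
  linarith [hdiv, e1, e3, hε0]

end RispAux



/-- Convergence of RISP-Prox (Theorem 2).
A run of the algorithm is encoded by: `N` restarted epochs followed by a final
epoch (index `N`) that completes `K` steps without triggering the restart
criterion.  `x i k` is the `k`-th iterate of epoch `i` (with the convention
`x i (k-1) = x i 0` for `k = 0`, realized by truncated subtraction on `ℕ`),
`z i k` the corresponding inertial point, and `len i` the length of restarted
epoch `i < N`.  The proximal step is encoded by its first-order optimality
characterization `(z^k - x^{k+1})/η = ∇f(x^{k+1}) + ∇g(z^k)`. -/
theorem risp_prox_convergence
    {d : ℕ} (hd : 1 ≤ d)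
    (f g F : EuclideanSpace ℝ (Fin d) → ℝ)
    (Lf Lg L ρf ρg ρ ν : ℝ)
    (hLdef : L = Lf + Lg) (hρdef : ρ = ρf + ρg)
    (hFdef : ∀ w, F w = f w + g w)
    (hL : 0 < L) (hρ : 0 < ρ)
    (hfd : Differentiable ℝ f) (hfd2 : Differentiable ℝ (gradient f))
    (hgd : Differentiable ℝ g) (hgd2 : Differentiable ℝ (gradient g))
    (hfconv : ConvexOn ℝ Set.univ f)
    (hflip : ∀ a b : EuclideanSpace ℝ (Fin d),
      ‖gradient f a - gradient f b‖ ≤ Lf * ‖a - b‖)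
    (hglip : ∀ a b : EuclideanSpace ℝ (Fin d),
      ‖gradient g a - gradient g b‖ ≤ Lg * ‖a - b‖)
    (hfHess : ∀ a b : EuclideanSpace ℝ (Fin d),
      ‖fderiv ℝ (gradient f) a - fderiv ℝ (gradient f) b‖ ≤ ρf * ‖a - b‖)
    (hgHess : ∀ a b : EuclideanSpace ℝ (Fin d),
      ‖fderiv ℝ (gradient g) a - fderiv ℝ (gradient g) b‖ ≤ ρg * ‖a - b‖)
    (hweak : ConvexOn ℝ Set.univ
      (fun w : EuclideanSpace ℝ (Fin d) => g w + (ν / 2) * ‖w‖ ^ 2))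
    (m : ℝ) (hm : ∀ y, m ≤ F y)
    (x0 : EuclideanSpace ℝ (Fin d))
    (ΔF : ℝ) (hΔF : ΔF = F x0 - m)
    (n : ℕ) (hn : 1 ≤ n)
    (ε η B θ : ℝ)
    (hε : ε = ΔF ^ ((4 : ℝ) / 7) * (2 * L) ^ ((2 : ℝ) / 7) * ρ ^ ((1 : ℝ) / 7)
          * (n : ℝ) ^ (-(4 : ℝ) / 7)
          + 4 * L ^ 2 * ρ⁻¹ * (n : ℝ) ^ (-(4 : ℝ)))
    (hν : ν ≤ 8 * (ε * ρ) ^ ((1 : ℝ) / 4) * Real.sqrt L)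
    (hη : η = 1 / (8 * L))
    (hB : B = Real.sqrt (ε / (4 * ρ)))
    (hθ : θ = 4 * (ε * ρ * η ^ 2) ^ ((1 : ℝ) / 4))
    (hθ0 : 0 < θ) (hθ1 : θ < 1)
    (K : ℕ) (hK : (K : ℝ) = θ⁻¹)
    -- a complete run of the algorithm:
    (N : ℕ)
    (x z : ℕ → ℕ → EuclideanSpace ℝ (Fin d))
    (len : ℕ → ℕ)
    (hstart : x 0 0 = x0)
    (hchain : ∀ i < N, x (i + 1) 0 = x i (len i))
    (hz : ∀ i k, z i k = x i k + (1 - θ) • (x i k - x i (k - 1)))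
    (hstep : ∀ i k,
      (1 / η) • (z i k - x i (k + 1)) = gradient f (x i (k + 1)) + gradient g (z i k))
    (hlen_pos : ∀ i < N, 1 ≤ len i)
    (hlen_le : ∀ i < N, len i ≤ K)
    (htrigger : ∀ i < N,
      B ^ 2 < (len i : ℝ) * ∑ t ∈ Finset.range (len i), ‖x i (t + 1) - x i t‖ ^ 2)
    (hno_early : ∀ i < N, ∀ k, 1 ≤ k → k < len i →
      (k : ℝ) * ∑ t ∈ Finset.range k, ‖x i (t + 1) - x i t‖ ^ 2 ≤ B ^ 2)
    (hfinal : ∀ k, 1 ≤ k → k ≤ K →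
      (k : ℝ) * ∑ t ∈ Finset.range k, ‖x N (t + 1) - x N t‖ ^ 2 ≤ B ^ 2)
    (K₀ : ℕ) (hK₀lb : K / 2 ≤ K₀) (hK₀ub : K₀ ≤ K - 1)
    (hK₀min : ∀ k, K / 2 ≤ k → k ≤ K - 1 →
      ‖x N (K₀ + 1) - x N K₀‖ ≤ ‖x N (k + 1) - x N k‖)
    (zhat : EuclideanSpace ℝ (Fin d))
    (hzhat : zhat = ((K₀ : ℝ) + 1)⁻¹ • ∑ k ∈ Finset.range (K₀ + 1), z N k) :
    (∑ i ∈ Finset.range N, len i) + K ≤ n ∧ ‖gradient F zhat‖ ≤ 45 * ε := by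
  -- nonnegativity of the Lipschitz constants
  have hpt : ∃ v : EuclideanSpace ℝ (Fin d), ‖v‖ = 1 := by
    refine ⟨EuclideanSpace.single ⟨0, hd⟩ (1:ℝ), ?_⟩
    rw [EuclideanSpace.norm_single]
    norm_num
  obtain ⟨v1, hv1⟩ := hpt
  have hLf0 : 0 ≤ Lf := by
    have := hflip v1 0
    rw [sub_zero, hv1, mul_one] at this
    exact le_trans (norm_nonneg _) this
  have hLg0 : 0 ≤ Lg := by
    have := hglip v1 0
    rw [sub_zero, hv1, mul_one] at this
    exact le_trans (norm_nonneg _) this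
  have hρf0 : 0 ≤ ρf := by
    have := hfHess v1 0
    rw [sub_zero, hv1, mul_one] at this
    exact le_trans (norm_nonneg _) this
  have hρg0 : 0 ≤ ρg := by
    have := hgHess v1 0
    rw [sub_zero, hv1, mul_one] at this
    exact le_trans (norm_nonneg _) this
  have hLfL : Lf ≤ L := by rw [hLdef]; linarith
  have hLgL : Lg ≤ L := by rw [hLdef]; linarith
  have hΔF0 : 0 ≤ ΔF := by
    rw [hΔF]; linarith [hm x0]
  obtain ⟨hε0, hB2, hB0, hθ4, hεLB, h4ρB, hνθ, hnθ, hΔFle⟩ :=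
    numerics hL hρ hΔF0 hn hε hν hη hB hθ hθ0 hθ1
  have hn0 : (0:ℝ) < (n:ℝ) := by exact_mod_cast Nat.lt_of_lt_of_le Nat.zero_lt_one hn
  have hK2 : 2 ≤ K := by
    by_contra hcon
    push_neg at hcon
    interval_cases K
    · rw [Nat.cast_zero] at hK
      have : θ⁻¹ > 1 := by
        rw [gt_iff_lt, lt_inv_comm₀] <;> simp [hθ0, hθ1] <;> linarith
      linarith [hK ▸ this]
    · rw [Nat.cast_one] at hK
      have : (1:ℝ) < θ⁻¹ := by
        rw [lt_inv_comm₀] <;> simp [hθ0] <;> linarith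
      linarith [hK ▸ this]
  have hε4 : 4 * ρ * B ^ 2 = ε := by
    rw [hB2]; field_simp
  -- Part 1 : iteration count
  have hFsum : ∀ w, F w = f w + g w := hFdef
  have key : ∀ i, i ≤ N → F (x i 0) ≤ F x0 - i * (2 * L * θ ^ 2 * B ^ 2) := by
    intro i
    induction i with
    | zero => intro _; rw [hstart]; simp
    | succ j ih =>
      intro hj
      have hjN : j < N := by omega
      have h1 := ih (by omega)
      have hed := epoch_descent f g L Lg ν θ η hL hLg0 hLgL hθ0 hθ1 hη hνθ hfd hgd hfconv
        hglip hweak (x j) (z j) (hz j) (hstep j) (len j)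
      have hSig : θ * B ^ 2 ≤ ∑ t ∈ Finset.range (len j), ‖x j (t + 1) - x j t‖ ^ 2 := by
        have ht := htrigger j hjN
        have hl := hlen_le j hjN
        have hlp := hlen_pos j hjN
        have hlR : (len j : ℝ) ≤ (K:ℝ) := by exact_mod_cast hl
        have hSig0 : 0 ≤ ∑ t ∈ Finset.range (len j), ‖x j (t + 1) - x j t‖ ^ 2 := by
          apply Finset.sum_nonneg; intro t _; positivity
        have h2 : B ^ 2 < (K:ℝ) * ∑ t ∈ Finset.range (len j), ‖x j (t + 1) - x j t‖ ^ 2 := by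
          calc B ^ 2 < (len j : ℝ) * ∑ t ∈ Finset.range (len j), ‖x j (t + 1) - x j t‖ ^ 2 := ht
            _ ≤ (K:ℝ) * ∑ t ∈ Finset.range (len j), ‖x j (t + 1) - x j t‖ ^ 2 :=
                mul_le_mul_of_nonneg_right hlR hSig0
        rw [hK] at h2
        have hθne : θ ≠ 0 := ne_of_gt hθ0
        have h3 := mul_le_mul_of_nonneg_left h2.le hθ0.le
        have h4 : θ * (θ⁻¹ * ∑ t ∈ Finset.range (len j), ‖x j (t + 1) - x j t‖ ^ 2)
            = ∑ t ∈ Finset.range (len j), ‖x j (t + 1) - x j t‖ ^ 2 := by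
          field_simp
        rw [h4] at h3
        linarith
      have hFj : F (x (j+1) 0) = f (x j (len j)) + g (x j (len j)) := by
        rw [hchain j hjN, hFsum]
      have hF0 : F (x j 0) = f (x j 0) + g (x j 0) := hFsum _
      have hdec : F (x (j+1) 0) ≤ F (x j 0) - 2 * L * θ * (θ * B ^ 2) := by
        rw [hFj, hF0]
        have h5 : (2 * L * θ) * (θ * B ^ 2)
            ≤ (2 * L * θ) * ∑ t ∈ Finset.range (len j), ‖x j (t + 1) - x j t‖ ^ 2 := by
          apply mul_le_mul_of_nonneg_left hSig (by positivity)
        linarith [hed]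
      push_cast
      have : ((j:ℝ) + 1) * (2 * L * θ ^ 2 * B ^ 2)
          = (j:ℝ) * (2 * L * θ ^ 2 * B ^ 2) + 2 * L * θ * (θ * B ^ 2) := by ring
      rw [this]
      linarith [hdec, h1]
  have hNbound : (N:ℝ) * (2 * L * θ ^ 2 * B ^ 2) ≤ ΔF := by
    have h1 := key N le_rfl
    have h2 := hm (x N 0)
    rw [hΔF]
    linarith
  have hNK : (N:ℝ) * (K:ℝ) ≤ (n:ℝ) / 2 := by
    have hpos : (0:ℝ) < 2 * L * θ ^ 2 * B ^ 2 := by positivity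
    have h1 : (N:ℝ) ≤ (n:ℝ) * θ / 2 := by
      have h2 : (N:ℝ) * (2 * L * θ ^ 2 * B ^ 2) ≤ ((n:ℝ) * θ / 2) * (2 * L * θ ^ 2 * B ^ 2) := by
        calc (N:ℝ) * (2 * L * θ ^ 2 * B ^ 2) ≤ ΔF := hNbound
          _ ≤ (n:ℝ) * L * B ^ 2 * θ ^ 3 := hΔFle
          _ = ((n:ℝ) * θ / 2) * (2 * L * θ ^ 2 * B ^ 2) := by ring
      exact le_of_mul_le_mul_right h2 hpos
    rw [hK]
    calc (N:ℝ) * θ⁻¹ ≤ ((n:ℝ) * θ / 2) * θ⁻¹ := by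
          apply mul_le_mul_of_nonneg_right h1 (by positivity)
      _ = (n:ℝ) / 2 := by field_simp
  have hKn : (K:ℝ) ≤ (n:ℝ) / 2 := by
    rw [hK]
    have h1 : (2:ℝ)/n ≤ θ := hnθ
    have h2 : θ⁻¹ ≤ ((2:ℝ)/n)⁻¹ := by
      apply inv_anti₀ (by positivity) h1
    calc θ⁻¹ ≤ ((2:ℝ)/n)⁻¹ := h2
      _ = (n:ℝ) / 2 := by field_simp
  have hsumlen : (∑ i ∈ Finset.range N, len i) ≤ N * K := by
    calc (∑ i ∈ Finset.range N, len i) ≤ ∑ i ∈ Finset.range N, K := by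
          apply Finset.sum_le_sum
          intro i hi
          exact hlen_le i (Finset.mem_range.1 hi)
      _ = N * K := by rw [Finset.sum_const, Finset.card_range, smul_eq_mul]
  have hpart1 : (∑ i ∈ Finset.range N, len i) + K ≤ n := by
    have h1 : ((∑ i ∈ Finset.range N, len i : ℕ) : ℝ) + (K:ℝ) ≤ (n:ℝ) := by
      have h2 : ((∑ i ∈ Finset.range N, len i : ℕ) : ℝ) ≤ (N:ℝ) * (K:ℝ) := by
        have := hsumlen
        exact_mod_cast this
      linarith [hNK, hKn]
    exact_mod_cast h1
  refine ⟨hpart1, ?_⟩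
  -- Part 2
  have hgradF : gradient F zhat = gradient f zhat + gradient g zhat := by
    have hFeq : F = fun w => f w + g w := funext hFdef
    rw [hFeq]
    unfold gradient
    rw [fderiv_fun_add (hfd zhat) (hgd zhat)]
    rw [map_add]
  rw [hgradF]
  exact final_epoch f g L Lf Lg ρf ρg ρ ε B θ η K K₀ hL hLf0 hLfL hρf0 hρg0 hρdef hB0 hθ0 hθ1
    hη hεLB hε4 hK2 hK hfd2 hgd2 hflip hfHess hgHess (x N) (z N) (hz N) (hstep N) hfinal
    hK₀lb hK₀ub hK₀min zhat hzhat
end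

section
/- (Proximal descent lemma.) Let f, g : ℝ^d → ℝ be differentiable with L_f- and L_g-Lipschitz gradients respectively, L = L_f + L_g, F = f + g, and η > 0. If points z, x⁺ ∈ ℝ^d satisfy (z − x⁺)/η = ∇f(x⁺) + ∇g(z), then F(x⁺) ≤ F(z) − (1/η − (3/2)·L)·‖x⁺ − z‖². -/
open InnerProductSpace

lemma inner_gradient_eq {E : Type*} [NormedAddCommGroup E] [InnerProductSpace ℝ E]
    [CompleteSpace E] (u : E → ℝ) (p v : E) :
    (inner ℝ (gradient u p) v : ℝ) = fderiv ℝ u p v := by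
  rw [gradient, toDual_symm_apply]

/-- Descent lemma: quadratic upper bound for a function with Lipschitz gradient. -/
lemma descent_aux {E : Type*} [NormedAddCommGroup E] [InnerProductSpace ℝ E]
    [CompleteSpace E] (u : E → ℝ) (L : ℝ) (hu : Differentiable ℝ u)
    (hl : ∀ a b : E, ‖gradient u a - gradient u b‖ ≤ L * ‖a - b‖) (x y : E) :
    u y ≤ u x + inner ℝ (gradient u x) (y - x) + L / 2 * ‖y - x‖ ^ 2 := by
  set v := y - x with hv
  have hline : ∀ t : ℝ, HasDerivAt (fun t : ℝ => x + t • v) v t := fun t => by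
    simpa using ((hasDerivAt_id t).smul_const v).const_add x
  have key : ∀ t : ℝ, HasDerivAt (fun t : ℝ => u (x + t • v))
      (inner ℝ (gradient u (x + t • v)) v : ℝ) t := by
    intro t
    have h2 := (hu (x + t • v)).hasFDerivAt.comp_hasDerivAt t (hline t)
    rw [inner_gradient_eq]; exact h2
  set ψ : ℝ → ℝ := fun t => u (x + t • v) - t * inner ℝ (gradient u x) v
      - L / 2 * ‖v‖ ^ 2 * t ^ 2 with hψ
  have hψd : ∀ t : ℝ, HasDerivAt ψ
      ((inner ℝ (gradient u (x + t • v)) v : ℝ) - inner ℝ (gradient u x) v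
        - L / 2 * ‖v‖ ^ 2 * (2 * t)) t := by
    intro t
    have h1 : HasDerivAt (fun t : ℝ => t * (inner ℝ (gradient u x) v : ℝ))
        (inner ℝ (gradient u x) v : ℝ) t := by
      simpa using (hasDerivAt_id t).mul_const (inner ℝ (gradient u x) v : ℝ)
    have h2 : HasDerivAt (fun t : ℝ => L / 2 * ‖v‖ ^ 2 * t ^ 2)
        (L / 2 * ‖v‖ ^ 2 * (2 * t)) t := by
      have h := (hasDerivAt_pow 2 t).const_mul (L / 2 * ‖v‖ ^ 2)
      refine h.congr_deriv ?_
      push_cast; ring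
    exact ((key t).sub h1).sub h2
  have hψdiff : Differentiable ℝ ψ := fun t => (hψd t).differentiableAt
  have hle : ψ 1 - ψ 0 ≤ 0 := by
    have := Convex.image_sub_le_mul_sub_of_deriv_le (convex_Icc (0:ℝ) 1)
      hψdiff.continuous.continuousOn hψdiff.differentiableOn (C := 0)
      (fun t ht => by
        rw [interior_Icc] at ht
        rw [(hψd t).deriv]
        have h1 : (inner ℝ (gradient u (x + t • v)) v : ℝ) - inner ℝ (gradient u x) v
            ≤ L * t * ‖v‖ ^ 2 := by
          have := real_inner_le_norm (gradient u (x + t • v) - gradient u x) v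
          have h2 := hl (x + t • v) x
          simp only [add_sub_cancel_left] at h2
          rw [norm_smul, Real.norm_eq_abs, abs_of_pos ht.1] at h2
          rw [inner_sub_left] at this
          nlinarith [norm_nonneg v, mul_le_mul_of_nonneg_right h2 (norm_nonneg v)]
        nlinarith)
      0 (by norm_num) 1 (by norm_num) (by norm_num)
    simpa using this
  have h0 : ψ 0 = u x := by simp [hψ]
  have h1 : ψ 1 = u y - inner ℝ (gradient u x) v - L / 2 * ‖v‖ ^ 2 := by
    simp [hψ, hv]
  rw [h0, h1] at hle
  linarith


lemma gradient_neg' {E : Type*} [NormedAddCommGroup E] [InnerProductSpace ℝ E]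
    [CompleteSpace E] (u : E → ℝ) (p : E) :
    gradient (fun q => -u q) p = - gradient u p := by
  rw [gradient, gradient, fderiv_fun_neg, map_neg]

/-- Lower quadratic bound. -/
lemma descent_aux_lower {E : Type*} [NormedAddCommGroup E] [InnerProductSpace ℝ E]
    [CompleteSpace E] (u : E → ℝ) (L : ℝ) (hu : Differentiable ℝ u)
    (hl : ∀ a b : E, ‖gradient u a - gradient u b‖ ≤ L * ‖a - b‖) (x y : E) :
    u x + inner ℝ (gradient u x) (y - x) - L / 2 * ‖y - x‖ ^ 2 ≤ u y := by
  have h := descent_aux (fun q => -u q) L hu.neg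
    (fun a b => by
      rw [gradient_neg', gradient_neg',
        show -gradient u a - -gradient u b = -(gradient u a - gradient u b) by abel, norm_neg]
      exact hl a b) x y
  rw [gradient_neg', inner_neg_left] at h
  linarith

/-- Proximal descent lemma. -/
theorem prox_descent_lemma
    {d : ℕ} (hd : 1 ≤ d)
    (f g : EuclideanSpace ℝ (Fin d) → ℝ) (Lf Lg : ℝ)
    (hfd : Differentiable ℝ f) (hgd : Differentiable ℝ g)
    (hflip : ∀ a b : EuclideanSpace ℝ (Fin d),
      ‖gradient f a - gradient f b‖ ≤ Lf * ‖a - b‖)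
    (hglip : ∀ a b : EuclideanSpace ℝ (Fin d),
      ‖gradient g a - gradient g b‖ ≤ Lg * ‖a - b‖)
    (η : ℝ) (hη : 0 < η)
    (z xp : EuclideanSpace ℝ (Fin d))
    (hchar : (1 / η) • (z - xp) = gradient f xp + gradient g z) :
    f xp + g xp ≤ f z + g z - (1 / η - (3 / 2) * (Lf + Lg)) * ‖xp - z‖ ^ 2 := by
  -- L's are nonneg, using two distinct points
  obtain ⟨a, b, hab⟩ : ∃ a b : EuclideanSpace ℝ (Fin d), ‖a - b‖ = 1 := by
    refine ⟨EuclideanSpace.single ⟨0, hd⟩ 1, 0, by simp⟩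
  have hLf : 0 ≤ Lf := by
    have := hflip a b; rw [hab] at this
    nlinarith [norm_nonneg (gradient f a - gradient f b)]
  have hLg : 0 ≤ Lg := by
    have := hglip a b; rw [hab] at this
    nlinarith [norm_nonneg (gradient g a - gradient g b)]
  have hf1 := descent_aux_lower f Lf hfd hflip xp z
  have hg1 := descent_aux g Lg hgd hglip z xp  -- g xp ≤ g z + ⟪∇g z, xp-z⟫ + Lg/2 ‖xp-z‖²
  have hsum : (inner ℝ (gradient f xp + gradient g z) (xp - z) : ℝ)
      = -(1 / η) * ‖xp - z‖ ^ 2 := by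
    rw [← hchar, real_inner_smul_left]
    have : (inner ℝ (z - xp) (xp - z) : ℝ) = -‖xp - z‖ ^ 2 := by
      rw [show z - xp = -(xp - z) by abel, inner_neg_left, real_inner_self_eq_norm_sq]
    rw [this]; ring
  have hswap : (inner ℝ (gradient f xp) (z - xp) : ℝ) = - inner ℝ (gradient f xp) (xp - z) := by
    rw [show z - xp = -(xp - z) by abel, inner_neg_right]
  have hnorm : ‖z - xp‖ = ‖xp - z‖ := norm_sub_rev z xp
  rw [inner_add_left] at hsum
  rw [hswap, hnorm] at hf1
  nlinarith [sq_nonneg ‖xp - z‖, mul_nonneg hLf (sq_nonneg ‖xp - z‖),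
    mul_nonneg hLg (sq_nonneg ‖xp - z‖)]
end

section
/- (Decrease under large gradient mapping.) Let f, g : ℝ^d → ℝ be differentiable with L_f- and L_g-Lipschitz gradients respectively, L = L_f + L_g, F = f + g, θ ∈ (0,1], and 0 < η ≤ 1/(8L). Let x^{−1} = x⁰, x¹, …, x^𝒦 and z⁰, …, z^{𝒦−1} (𝒦 ≥ 1) be an inertial proximal epoch. Let B > 0 and assume that (𝒦−1)·Σ_{t=0}^{𝒦−2}‖x^{t+1} − x^t‖² ≤ B² (vacuous when 𝒦 = 1) and that the gradient mapping at the last iterate is large: ‖z^{𝒦−1} − x^𝒦‖ ≥ B. Then F(x^𝒦) − F(x⁰) ≤ −B²/(8η). -/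
section Aux9
open InnerProductSpace RealInnerProductSpace

lemma seg_norm_le_aux9 {E : Type*} [NormedAddCommGroup E] [InnerProductSpace ℝ E]
    {x y v : E} (hv : v ∈ segment ℝ x y) : ‖v - x‖ ≤ ‖y - x‖ := by
  obtain ⟨a, b, ha, hb, hab, rfl⟩ := hv
  have ha' : a = 1 - b := by linarith
  subst ha'
  have : (1 - b) • x + b • y - x = b • (y - x) := by module
  rw [this, norm_smul, Real.norm_eq_abs, abs_of_nonneg hb]
  nlinarith [norm_nonneg (y - x)]

lemma grad_taylor_aux9 {E : Type*} [NormedAddCommGroup E] [InnerProductSpace ℝ E] [CompleteSpace E]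
    (u : E → ℝ) (hu : Differentiable ℝ u) {C : ℝ} (hC : 0 ≤ C)
    (hlip : ∀ a b : E, ‖gradient u a - gradient u b‖ ≤ C * ‖a - b‖) (x y : E) :
    |u y - u x - ⟪gradient u x, y - x⟫_ℝ| ≤ C * ‖y - x‖ ^ 2 := by
  set c := gradient u x with hc'
  have hder : ∀ v : E, HasFDerivAt (fun w => u w - ⟪c, w⟫_ℝ)
      ((toDual ℝ E (gradient u v)) - (toDual ℝ E c)) v := by
    intro v
    have h1 : HasFDerivAt u (toDual ℝ E (gradient u v)) v :=
      ((hu v).hasGradientAt).hasFDerivAt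
    have h2 : HasFDerivAt (fun w => ⟪c, w⟫_ℝ) (toDual ℝ E c) v := by
      have := (toDual ℝ E c).hasFDerivAt (x := v)
      convert this using 2
      simp
    exact h1.sub h2
  have key := Convex.norm_image_sub_le_of_norm_hasFDerivWithin_le
    (f := fun w => u w - ⟪c, w⟫_ℝ)
    (f' := fun v => (toDual ℝ E (gradient u v)) - (toDual ℝ E c))
    (fun v _ => (hder v).hasFDerivWithinAt)
    (C := C * ‖y - x‖)
    (fun v hv => by
      have h1 : ‖(toDual ℝ E (gradient u v)) - (toDual ℝ E c)‖ = ‖gradient u v - c‖ := by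
        rw [← map_sub, (toDual ℝ E).norm_map]
      rw [h1]
      calc ‖gradient u v - c‖ ≤ C * ‖v - x‖ := hlip v x
        _ ≤ C * ‖y - x‖ := by
          exact mul_le_mul_of_nonneg_left (seg_norm_le_aux9 hv) hC)
    (convex_segment x y) (left_mem_segment ℝ x y) (right_mem_segment ℝ x y)
  have : u y - ⟪c, y⟫_ℝ - (u x - ⟪c, x⟫_ℝ) = u y - u x - ⟪c, y - x⟫_ℝ := by
    rw [inner_sub_right]; ring
  rw [this, Real.norm_eq_abs] at key
  calc |u y - u x - ⟪c, y - x⟫_ℝ| ≤ C * ‖y - x‖ * ‖y - x‖ := key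
    _ = C * ‖y - x‖ ^ 2 := by ring

end Aux9

open InnerProductSpace RealInnerProductSpace in
set_option maxHeartbeats 1000000 in
/-- Sufficient decrease along an inertial proximal epoch when the
gradient mapping at the last iterate is large
(the convention `x^{-1} = x^0` is realized by truncated subtraction on `ℕ`). -/
theorem inertial_prox_epoch_decrease_large_gradient_mapping
    {d : ℕ} (hd : 1 ≤ d)
    (f g : EuclideanSpace ℝ (Fin d) → ℝ) (Lf Lg L : ℝ)
    (hLdef : L = Lf + Lg) (hL : 0 < L)
    (hfd : Differentiable ℝ f) (hgd : Differentiable ℝ g)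
    (hflip : ∀ a b : EuclideanSpace ℝ (Fin d),
      ‖gradient f a - gradient f b‖ ≤ Lf * ‖a - b‖)
    (hglip : ∀ a b : EuclideanSpace ℝ (Fin d),
      ‖gradient g a - gradient g b‖ ≤ Lg * ‖a - b‖)
    (θ η : ℝ) (hθ0 : 0 < θ) (hθ1 : θ ≤ 1) (hη0 : 0 < η) (hη1 : η ≤ 1 / (8 * L))
    (𝒦 : ℕ) (h𝒦 : 1 ≤ 𝒦)
    (x z : ℕ → EuclideanSpace ℝ (Fin d))
    (hz : ∀ k < 𝒦, z k = x k + (1 - θ) • (x k - x (k - 1)))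
    (hchar : ∀ k < 𝒦,
      (1 / η) • (z k - x (k + 1)) = gradient f (x (k + 1)) + gradient g (z k))
    (B : ℝ) (hB : 0 < B)
    (hsum : ((𝒦 - 1 : ℕ) : ℝ)
      * ∑ t ∈ Finset.range (𝒦 - 1), ‖x (t + 1) - x t‖ ^ 2 ≤ B ^ 2)
    (hbig : B ≤ ‖z (𝒦 - 1) - x 𝒦‖) :
    (f (x 𝒦) + g (x 𝒦)) - (f (x 0) + g (x 0)) ≤ -B ^ 2 / (8 * η) := by
  have hex : ∃ a b : EuclideanSpace ℝ (Fin d), ‖a - b‖ = 1 := by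
    refine ⟨EuclideanSpace.single ⟨0, hd⟩ (1 : ℝ), 0, ?_⟩
    rw [sub_zero, EuclideanSpace.norm_single, norm_one]
  obtain ⟨a₀, b₀, hab₀⟩ := hex
  have hLf0 : 0 ≤ Lf := by
    have := hflip a₀ b₀; rw [hab₀] at this
    nlinarith [norm_nonneg (gradient f a₀ - gradient f b₀)]
  have hLg0 : 0 ≤ Lg := by
    have := hglip a₀ b₀; rw [hab₀] at this
    nlinarith [norm_nonneg (gradient g a₀ - gradient g b₀)]
  clear hab₀
  have hηL : 8 * η * L ≤ 1 := by
    rw [le_div_iff₀ (by positivity)] at hη1; nlinarith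
  have hLf8 : 8 * η * Lf ≤ 1 := by nlinarith
  have hLg8 : 8 * η * Lg ≤ 1 := by nlinarith
  -- per-step estimate
  have step : ∀ k < 𝒦, 8 * η * ((f (x (k+1)) + g (x (k+1))) - (f (x k) + g (x k))) ≤
      -3 * ‖z k - x (k+1)‖ ^ 2 - 3 * ‖x (k+1) - x k‖ ^ 2 + 5 * ‖x k - x (k-1)‖ ^ 2 := by
    intro k hk
    have hA0 : (0:ℝ) ≤ ‖z k - x (k+1)‖ ^ 2 := sq_nonneg _
    have hD0 : (0:ℝ) ≤ ‖x (k+1) - x k‖ ^ 2 := sq_nonneg _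
    have hZ0 : (0:ℝ) ≤ ‖z k - x k‖ ^ 2 := sq_nonneg _
    have hP0 : (0:ℝ) ≤ ‖x k - x (k-1)‖ ^ 2 := sq_nonneg _
    have hf := grad_taylor_aux9 f hfd hLf0 hflip (x (k+1)) (x k)
    have hg1 := grad_taylor_aux9 g hgd hLg0 hglip (z k) (x (k+1))
    have hg2 := grad_taylor_aux9 g hgd hLg0 hglip (z k) (x k)
    rw [abs_le] at hf hg1 hg2
    rw [norm_sub_rev (x k) (x (k+1))] at hf
    rw [norm_sub_rev (x (k+1)) (z k)] at hg1
    rw [norm_sub_rev (x k) (z k)] at hg2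
    have e1 : ⟪gradient f (x (k+1)), x k - x (k+1)⟫_ℝ
        = -⟪gradient f (x (k+1)), x (k+1) - x k⟫_ℝ := by
      rw [← inner_neg_right]; congr 1; abel
    rw [e1] at hf
    have e2 : ⟪gradient g (z k), x (k+1) - z k⟫_ℝ - ⟪gradient g (z k), x k - z k⟫_ℝ
        = ⟪gradient g (z k), x (k+1) - x k⟫_ℝ := by
      rw [← inner_sub_right]; congr 1; abel
    have hW : η * (⟪gradient f (x (k+1)), x (k+1) - x k⟫_ℝ
        + ⟪gradient g (z k), x (k+1) - x k⟫_ℝ)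
        = ⟪z k - x (k+1), x (k+1) - x k⟫_ℝ := by
      have h := congrArg (fun v => ⟪v, x (k+1) - x k⟫_ℝ) (hchar k hk)
      simp only [real_inner_smul_left, inner_add_left] at h
      rw [← h]
      field_simp
    have h3pt : 2 * ⟪z k - x (k+1), x (k+1) - x k⟫_ℝ
        = ‖z k - x k‖ ^ 2 - ‖z k - x (k+1)‖ ^ 2 - ‖x (k+1) - x k‖ ^ 2 := by
      have hsum' : (z k - x (k+1)) + (x (k+1) - x k) = z k - x k := by abel
      have h := norm_add_sq_real (z k - x (k+1)) (x (k+1) - x k)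
      rw [hsum'] at h
      linarith
    have hZP : ‖z k - x k‖ ^ 2 ≤ ‖x k - x (k-1)‖ ^ 2 := by
      have h2 : z k - x k = (1 - θ) • (x k - x (k-1)) := by rw [hz k hk]; abel
      have h3 : ‖z k - x k‖ ^ 2 = (1 - θ) ^ 2 * ‖x k - x (k-1)‖ ^ 2 := by
        rw [h2, norm_smul, Real.norm_eq_abs, abs_of_nonneg (by linarith), mul_pow]
      have h4 : (1 - θ) ^ 2 ≤ 1 := pow_le_one₀ (by linarith) (by linarith)
      rw [h3]
      exact mul_le_of_le_one_left hP0 h4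
    have hFdiff : (f (x (k+1)) + g (x (k+1))) - (f (x k) + g (x k)) ≤
        ⟪gradient f (x (k+1)), x (k+1) - x k⟫_ℝ + ⟪gradient g (z k), x (k+1) - x k⟫_ℝ
        + Lf * ‖x (k+1) - x k‖ ^ 2 + Lg * ‖z k - x (k+1)‖ ^ 2 + Lg * ‖z k - x k‖ ^ 2 := by
      linarith [hf.1, hg1.2, hg2.1, e2]
    have hmul := mul_le_mul_of_nonneg_left hFdiff (by positivity : (0:ℝ) ≤ 8 * η)
    have e5 : 8 * η * (⟪gradient f (x (k+1)), x (k+1) - x k⟫_ℝ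
        + ⟪gradient g (z k), x (k+1) - x k⟫_ℝ
        + Lf * ‖x (k+1) - x k‖ ^ 2 + Lg * ‖z k - x (k+1)‖ ^ 2 + Lg * ‖z k - x k‖ ^ 2)
        = 8 * ⟪z k - x (k+1), x (k+1) - x k⟫_ℝ
          + (8 * η * Lf) * ‖x (k+1) - x k‖ ^ 2 + (8 * η * Lg) * ‖z k - x (k+1)‖ ^ 2
          + (8 * η * Lg) * ‖z k - x k‖ ^ 2 := by
      rw [← hW]; ring
    rw [e5] at hmul
    have e6 := mul_le_mul_of_nonneg_right hLf8 hD0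
    have e7 := mul_le_mul_of_nonneg_right hLg8 hA0
    have e8 := mul_le_mul_of_nonneg_right hLg8 hZ0
    linarith
  -- telescoping and summation
  have tel : (f (x 𝒦) + g (x 𝒦)) - (f (x 0) + g (x 0))
      = ∑ k ∈ Finset.range 𝒦, ((f (x (k+1)) + g (x (k+1))) - (f (x k) + g (x k))) :=
    (Finset.sum_range_sub (fun k => f (x k) + g (x k)) 𝒦).symm
  have hsumle : 8 * η * ((f (x 𝒦) + g (x 𝒦)) - (f (x 0) + g (x 0))) ≤
      -3 * (∑ k ∈ Finset.range 𝒦, ‖z k - x (k+1)‖ ^ 2)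
      - 3 * (∑ k ∈ Finset.range 𝒦, ‖x (k+1) - x k‖ ^ 2)
      + 5 * (∑ k ∈ Finset.range 𝒦, ‖x k - x (k-1)‖ ^ 2) := by
    rw [tel, Finset.mul_sum]
    calc ∑ k ∈ Finset.range 𝒦, 8 * η * ((f (x (k+1)) + g (x (k+1))) - (f (x k) + g (x k)))
        ≤ ∑ k ∈ Finset.range 𝒦, (-3 * ‖z k - x (k+1)‖ ^ 2 - 3 * ‖x (k+1) - x k‖ ^ 2
            + 5 * ‖x k - x (k-1)‖ ^ 2) :=
          Finset.sum_le_sum (fun k hk => step k (Finset.mem_range.mp hk))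
      _ = _ := by
          rw [Finset.sum_add_distrib, Finset.sum_sub_distrib, ← Finset.mul_sum,
            ← Finset.mul_sum, ← Finset.mul_sum]
  have hS0 : (0:ℝ) ≤ ∑ t ∈ Finset.range (𝒦 - 1), ‖x (t + 1) - x t‖ ^ 2 :=
    Finset.sum_nonneg (fun t _ => sq_nonneg _)
  have hSB : ∑ t ∈ Finset.range (𝒦 - 1), ‖x (t + 1) - x t‖ ^ 2 ≤ B ^ 2 := by
    rcases Nat.lt_or_ge 𝒦 2 with h2 | h2
    · have h3 : 𝒦 - 1 = 0 := by omega
      rw [h3, Finset.range_zero, Finset.sum_empty]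
      positivity
    · have h3 : (1 : ℝ) ≤ ((𝒦 - 1 : ℕ) : ℝ) := by
        have : 1 ≤ 𝒦 - 1 := by omega
        exact_mod_cast this
      nlinarith
  have hP_sum : ∑ k ∈ Finset.range 𝒦, ‖x k - x (k-1)‖ ^ 2
      = ∑ t ∈ Finset.range (𝒦 - 1), ‖x (t + 1) - x t‖ ^ 2 := by
    obtain ⟨m, rfl⟩ : ∃ m, 𝒦 = m + 1 := ⟨𝒦 - 1, by omega⟩
    rw [Finset.sum_range_succ']
    simp
  have hA_sum : B ^ 2 ≤ ∑ k ∈ Finset.range 𝒦, ‖z k - x (k+1)‖ ^ 2 := by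
    have hmem : 𝒦 - 1 ∈ Finset.range 𝒦 := Finset.mem_range.mpr (by omega)
    have h1 : B ^ 2 ≤ ‖z (𝒦 - 1) - x ((𝒦 - 1) + 1)‖ ^ 2 := by
      have he : (𝒦 - 1) + 1 = 𝒦 := by omega
      rw [he]
      nlinarith [norm_nonneg (z (𝒦 - 1) - x 𝒦)]
    exact h1.trans (Finset.single_le_sum (f := fun k => ‖z k - x (k+1)‖ ^ 2)
      (fun k _ => sq_nonneg _) hmem)
  have hD_sum : ∑ t ∈ Finset.range (𝒦 - 1), ‖x (t + 1) - x t‖ ^ 2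
      ≤ ∑ k ∈ Finset.range 𝒦, ‖x (k+1) - x k‖ ^ 2 :=
    Finset.sum_le_sum_of_subset_of_nonneg
      (Finset.range_subset_range.mpr (by omega)) (fun k _ _ => sq_nonneg _)
  have hfinal : 8 * η * ((f (x 𝒦) + g (x 𝒦)) - (f (x 0) + g (x 0))) ≤ -B ^ 2 := by
    rw [hP_sum] at hsumle
    linarith
  have h9 : (0:ℝ) < 8 * η := by positivity
  have h10 : -B ^ 2 / (8 * η) = -(B ^ 2) / (8 * η) := by ring
  rw [h10, le_div_iff₀ h9]
  linarith
end

section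
/- (Sufficient decrease per triggered epoch of RISP-Prox.) Let f, g : ℝ^d → ℝ be twice differentiable with f convex, ∇f L_f-Lipschitz, Hessian of f ρ_f-Lipschitz, ∇g L_g-Lipschitz, Hessian of g ρ_g-Lipschitz; set L = L_f + L_g, ρ = ρ_f + ρ_g, F = f + g. Let ε > 0, η = 1/(8L), B = (1/2)·√(ε/ρ), θ = 4·(ε·ρ·η²)^{1/4} with θ ∈ (0,1], and let K ≥ 1 be an integer with K·θ = 1. Assume every eigenvalue of ∇²g(x⁰) is at least −θ/η. Let x^{−1} = x⁰, x¹, …, x^𝒦 and z⁰, …, z^{𝒦−1} be an inertial proximal epoch with 1 ≤ 𝒦 ≤ K such that the restart criterion is reached at step 𝒦: for every k ∈ {1,…,𝒦−1}, k·Σ_{t=0}^{k−1}‖x^{t+1} − x^t‖² ≤ B², and 𝒦·Σ_{t=0}^{𝒦−1}‖x^{t+1} − x^t‖² > B². Then F(x^𝒦) − F(x⁰) ≤ −(1/2)·ε^{3/2}/√ρ. -/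
set_option maxHeartbeats 1600000

open Set InnerProductSpace
open scoped RealInnerProductSpace

noncomputable section

variable {E : Type*} [NormedAddCommGroup E] [InnerProductSpace ℝ E] [CompleteSpace E]

/-- Integration lemma: if `φ' t ≤ a + b t + c t²` on `[0,1]` then `φ 1 ≤ φ 0 + a + b/2 + c/3`. -/
lemma rp_integ {φ φd : ℝ → ℝ} (hφ : ∀ t, HasDerivAt φ (φd t) t)
    {a b c : ℝ} (hb : ∀ t ∈ Icc (0:ℝ) 1, φd t ≤ a + b*t + c*t^2) :
    φ 1 ≤ φ 0 + (a + b/2 + c/3) := by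
  set ψ : ℝ → ℝ := fun t => φ t - (a*t + b/2*t^2 + c/3*t^3) with hψdef
  have hψd : ∀ t, HasDerivAt ψ (φd t - (a + b*t + c*t^2)) t := by
    intro t
    have h2 : HasDerivAt (fun t : ℝ => a*t + b/2*t^2 + c/3*t^3) (a + b*t + c*t^2) t := by
      have h1 : HasDerivAt (fun s : ℝ => s) 1 t := hasDerivAt_id t
      have hp2 := hasDerivAt_pow 2 t
      have hp3 := hasDerivAt_pow 3 t
      refine HasDerivAt.congr_deriv
        (((h1.const_mul a).add (hp2.const_mul (b/2))).add (hp3.const_mul (c/3))) ?_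
      push_cast; ring
    exact (hφ t).sub h2
  have hanti : AntitoneOn ψ (Icc 0 1) := by
    apply antitoneOn_of_deriv_nonpos (convex_Icc 0 1)
    · exact fun t _ => ((hψd t).continuousAt.continuousWithinAt)
    · intro t _; exact (hψd t).differentiableAt.differentiableWithinAt
    · intro t ht
      rw [interior_Icc] at ht
      rw [(hψd t).deriv]
      have := hb t ⟨ht.1.le, ht.2.le⟩
      linarith
  have h01 := hanti (left_mem_Icc.mpr (by norm_num)) (right_mem_Icc.mpr (by norm_num)) zero_le_one
  simp only [hψdef] at h01
  nlinarith [h01]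

/-- Derivative of `f` along a line, in terms of the gradient. -/
lemma rp_line_deriv {f : E → ℝ} (hf : Differentiable ℝ f) (y v : E) (t : ℝ) :
    HasDerivAt (fun s : ℝ => f (y + s • v)) ⟪gradient f (y + t • v), v⟫ t := by
  have hc : HasDerivAt (fun s : ℝ => y + s • v) v t := by
    simpa using ((hasDerivAt_id t).smul_const v).const_add y
  have hg : HasGradientAt f (gradient f (y + t • v)) (y + t • v) :=
    (hf (y + t • v)).hasGradientAt
  have hF : HasFDerivAt f (toDual ℝ E (gradient f (y + t • v))) (y + t • v) :=
    hasGradientAt_iff_hasFDerivAt.mp hg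
  have := hF.comp_hasDerivAt t hc
  simp only [Function.comp_def, InnerProductSpace.toDual_apply_apply] at this
  exact this

/-- Derivative of the gradient along a line. -/
lemma rp_grad_line_deriv {f : E → ℝ} (hf2 : Differentiable ℝ (gradient f)) (y v : E) (t : ℝ) :
    HasDerivAt (fun s : ℝ => gradient f (y + s • v)) (fderiv ℝ (gradient f) (y + t • v) v) t := by
  have hc : HasDerivAt (fun s : ℝ => y + s • v) v t := by
    simpa using ((hasDerivAt_id t).smul_const v).const_add y
  exact (hf2 (y + t • v)).hasFDerivAt.comp_hasDerivAt t hc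

/-- Gradient inequality for convex functions. -/
lemma rp_convex_grad {f : E → ℝ} (hf : Differentiable ℝ f) (hconv : ConvexOn ℝ univ f)
    (p q : E) : f p + ⟪gradient f p, q - p⟫ ≤ f q := by
  set φ : ℝ → ℝ := fun s => f (p + s • (q - p)) with hφdef
  have hφconv : ConvexOn ℝ univ φ := by
    have hA := hconv.comp_affineMap (AffineMap.lineMap p q : ℝ →ᵃ[ℝ] E)
    have : (f ∘ (AffineMap.lineMap p q : ℝ →ᵃ[ℝ] E)) = φ := by
      funext s
      simp only [Function.comp_apply, hφdef, AffineMap.lineMap_apply_module]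
      congr 1
      module
    rw [this] at hA
    simpa using hA
  have hd0 : HasDerivAt φ ⟪gradient f p, q - p⟫ 0 := by
    have := rp_line_deriv hf p (q - p) 0
    simpa using this
  have hslope := hφconv.le_slope_of_hasDerivAt (mem_univ 0) (mem_univ 1) one_pos hd0
  have : slope φ 0 1 = φ 1 - φ 0 := by
    simp [slope_def_field]
  rw [this] at hslope
  have h1 : φ 1 = f q := by simp [hφdef]
  have h0 : φ 0 = f p := by simp [hφdef]
  rw [h1, h0] at hslope
  linarith

/-- Quadratic Taylor bound for the gradient. -/
lemma rp_grad_taylor {g : E → ℝ} (hg2 : Differentiable ℝ (gradient g)) {ρg : ℝ}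
    (hH : ∀ a b : E, ‖fderiv ℝ (gradient g) a - fderiv ℝ (gradient g) b‖ ≤ ρg * ‖a - b‖)
    (y v : E) :
    ‖gradient g (y + v) - gradient g y - fderiv ℝ (gradient g) y v‖ ≤ ρg/2 * ‖v‖^2 := by
  rcases eq_or_ne v 0 with hv | hv
  · simp [hv]
  have hρ : 0 ≤ ρg := by
    have h := hH (y + v) y
    have h2 : (0:ℝ) ≤ ρg * ‖v‖ := le_trans (norm_nonneg _) (by simpa using h)
    have hv' : 0 < ‖v‖ := norm_pos_iff.mpr hv
    nlinarith
  set V := gradient g (y + v) - gradient g y - fderiv ℝ (gradient g) y v with hVdef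
  rcases eq_or_lt_of_le (norm_nonneg V) with h0 | h0
  · rw [← h0]; positivity
  set φ : ℝ → ℝ := fun t => ⟪gradient g (y + t • v), V⟫ - t * ⟪fderiv ℝ (gradient g) y v, V⟫
    with hφdef
  have hφd : ∀ t, HasDerivAt φ
      (⟪fderiv ℝ (gradient g) (y + t • v) v, V⟫ - ⟪fderiv ℝ (gradient g) y v, V⟫) t := by
    intro t
    have h1 := (rp_grad_line_deriv hg2 y v t).inner ℝ (hasDerivAt_const t V)
    simp only [inner_zero_right, add_zero, zero_add] at h1
    have h2 : HasDerivAt (fun s : ℝ => s * ⟪fderiv ℝ (gradient g) y v, V⟫)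
        ⟪fderiv ℝ (gradient g) y v, V⟫ t := by
      simpa using (hasDerivAt_id t).mul_const ⟪fderiv ℝ (gradient g) y v, V⟫
    exact h1.sub h2
  have hbound : ∀ t ∈ Icc (0:ℝ) 1,
      (⟪fderiv ℝ (gradient g) (y + t • v) v, V⟫ - ⟪fderiv ℝ (gradient g) y v, V⟫)
        ≤ 0 + (ρg * ‖v‖^2 * ‖V‖) * t + 0 * t^2 := by
    intro t ht
    have heq : ⟪fderiv ℝ (gradient g) (y + t • v) v, V⟫ - ⟪fderiv ℝ (gradient g) y v, V⟫
        = ⟪(fderiv ℝ (gradient g) (y + t • v) - fderiv ℝ (gradient g) y) v, V⟫ := by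
      simp [ContinuousLinearMap.sub_apply, inner_sub_left]
    rw [heq]
    have h1 : ⟪(fderiv ℝ (gradient g) (y + t • v) - fderiv ℝ (gradient g) y) v, V⟫
        ≤ ‖(fderiv ℝ (gradient g) (y + t • v) - fderiv ℝ (gradient g) y) v‖ * ‖V‖ :=
      real_inner_le_norm _ _
    have h2 : ‖(fderiv ℝ (gradient g) (y + t • v) - fderiv ℝ (gradient g) y) v‖
        ≤ ‖fderiv ℝ (gradient g) (y + t • v) - fderiv ℝ (gradient g) y‖ * ‖v‖ :=
      ContinuousLinearMap.le_opNorm _ _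
    have h3 := hH (y + t • v) y
    have h4 : ‖y + t • v - y‖ = t * ‖v‖ := by
      simp [norm_smul, abs_of_nonneg ht.1]
    rw [h4] at h3
    have hVn : 0 ≤ ‖V‖ := norm_nonneg _
    have hvn : 0 ≤ ‖v‖ := norm_nonneg _
    nlinarith [mul_le_mul_of_nonneg_right (le_trans h2 (mul_le_mul_of_nonneg_right h3 hvn)) hVn]
  have hkey := rp_integ hφd hbound
  have hφ1 : φ 1 - φ 0 = ‖V‖^2 := by
    have h10 : φ 1 - φ 0 = ⟪gradient g (y + v) - gradient g y - fderiv ℝ (gradient g) y v, V⟫ := by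
      simp only [hφdef, one_smul, zero_smul, add_zero, one_mul, zero_mul, inner_sub_left]
      ring
    rw [h10, ← hVdef, real_inner_self_eq_norm_sq]
  clear_value V φ
  have hineq : ‖V‖^2 ≤ ρg * ‖v‖^2 * ‖V‖ / 2 := by linarith [hkey, hφ1]
  nlinarith [h0, hineq]

/-- key scalar estimate on the derivative along the segment, upper version -/
private lemma seg_deriv_bound {g : E → ℝ} (hg2 : Differentiable ℝ (gradient g)) {ρg : ℝ}
    (hH : ∀ a b : E, ‖fderiv ℝ (gradient g) a - fderiv ℝ (gradient g) b‖ ≤ ρg * ‖a - b‖)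
    (x₀ y v : E) {t : ℝ} (ht : t ∈ Icc (0:ℝ) 1) :
    |⟪gradient g (y + t • v), v⟫ - ⟪gradient g y, v⟫
      - t * ⟪fderiv ℝ (gradient g) x₀ v, v⟫|
      ≤ (ρg * ‖y - x₀‖ * ‖v‖^2) * t + (ρg/2 * ‖v‖^3) * t^2 := by
  have hA := rp_grad_taylor hg2 hH y (t • v)
  have hsmul : ‖t • v‖^2 = t^2 * ‖v‖^2 := by
    rw [norm_smul]; rw [Real.norm_eq_abs, mul_pow, sq_abs]
  rw [hsmul] at hA
  set Hy := fderiv ℝ (gradient g) y with hHy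
  set H0 := fderiv ℝ (gradient g) x₀ with hH0
  have hsplit : ⟪gradient g (y + t • v), v⟫ - ⟪gradient g y, v⟫ - t * ⟪H0 v, v⟫
      = ⟪gradient g (y + t • v) - gradient g y - Hy (t • v), v⟫
        + t * ⟪(Hy - H0) v, v⟫ := by
    have h1 : Hy (t • v) = t • Hy v := by simp
    simp only [inner_sub_left, ContinuousLinearMap.sub_apply, h1, real_inner_smul_left]
    ring
  rw [hsplit]
  have h1 : |⟪gradient g (y + t • v) - gradient g y - Hy (t • v), v⟫|
      ≤ (ρg/2 * ‖v‖^3) * t^2 := by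
    refine le_trans (abs_real_inner_le_norm _ _) ?_
    calc ‖gradient g (y + t • v) - gradient g y - Hy (t • v)‖ * ‖v‖
        ≤ (ρg/2 * (t^2 * ‖v‖^2)) * ‖v‖ := by
          exact mul_le_mul_of_nonneg_right hA (norm_nonneg v)
      _ = (ρg/2 * ‖v‖^3) * t^2 := by ring
  have h2 : |t * ⟪(Hy - H0) v, v⟫| ≤ (ρg * ‖y - x₀‖ * ‖v‖^2) * t := by
    rw [abs_mul, abs_of_nonneg ht.1]
    have ha := abs_real_inner_le_norm ((Hy - H0) v) v
    have hb := ContinuousLinearMap.le_opNorm (Hy - H0) v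
    have hc := hH y x₀
    have hvn : (0:ℝ) ≤ ‖v‖ := norm_nonneg _
    have hVn : (0:ℝ) ≤ ‖(Hy - H0) v‖ := norm_nonneg _
    have : |⟪(Hy - H0) v, v⟫| ≤ ρg * ‖y - x₀‖ * ‖v‖^2 := by
      refine le_trans ha ?_
      calc ‖(Hy - H0) v‖ * ‖v‖ ≤ (‖Hy - H0‖ * ‖v‖) * ‖v‖ :=
            mul_le_mul_of_nonneg_right hb hvn
        _ ≤ ((ρg * ‖y - x₀‖) * ‖v‖) * ‖v‖ := by
            have := mul_le_mul_of_nonneg_right (mul_le_mul_of_nonneg_right hc hvn) hvn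
            exact this
        _ = ρg * ‖y - x₀‖ * ‖v‖^2 := by ring
    calc t * |⟪(Hy - H0) v, v⟫| ≤ t * (ρg * ‖y - x₀‖ * ‖v‖^2) :=
          mul_le_mul_of_nonneg_left this ht.1
      _ = (ρg * ‖y - x₀‖ * ‖v‖^2) * t := by ring
  calc |⟪gradient g (y + t • v) - gradient g y - Hy (t • v), v⟫ + t * ⟪(Hy - H0) v, v⟫|
      ≤ _ + _ := abs_add_le _ _
    _ ≤ (ρg * ‖y - x₀‖ * ‖v‖^2) * t + (ρg/2 * ‖v‖^3) * t^2 := by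
        have := add_le_add h2 h1
        linarith

/-- Second-order Taylor upper bound with Hessian taken at a third point `x₀`. -/
lemma rp_taylor2_upper {g : E → ℝ} (hg : Differentiable ℝ g)
    (hg2 : Differentiable ℝ (gradient g)) {ρg : ℝ}
    (hH : ∀ a b : E, ‖fderiv ℝ (gradient g) a - fderiv ℝ (gradient g) b‖ ≤ ρg * ‖a - b‖)
    (x₀ y w : E) :
    g w ≤ g y + ⟪gradient g y, w - y⟫ + 1/2 * ⟪fderiv ℝ (gradient g) x₀ (w - y), w - y⟫
      + ρg/2 * ‖y - x₀‖ * ‖w - y‖^2 + ρg/6 * ‖w - y‖^3 := by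
  set v := w - y with hv
  have hφd : ∀ t, HasDerivAt (fun s : ℝ => g (y + s • v)) ⟪gradient g (y + t • v), v⟫ t :=
    fun t => rp_line_deriv hg y v t
  have hb : ∀ t ∈ Icc (0:ℝ) 1, ⟪gradient g (y + t • v), v⟫
      ≤ (⟪gradient g y, v⟫) + (⟪fderiv ℝ (gradient g) x₀ v, v⟫ + ρg * ‖y - x₀‖ * ‖v‖^2) * t
        + (ρg/2 * ‖v‖^3) * t^2 := by
    intro t ht
    have := seg_deriv_bound hg2 hH x₀ y v ht
    have h := (abs_le.mp this).2
    nlinarith [h]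
  have hkey := rp_integ hφd hb
  have h1 : y + (1:ℝ) • v = w := by rw [hv]; simp
  have h0 : y + (0:ℝ) • v = y := by simp
  simp only [h1, h0] at hkey
  linarith [hkey]

/-- Second-order Taylor lower bound with Hessian taken at a third point `x₀`. -/
lemma rp_taylor2_lower {g : E → ℝ} (hg : Differentiable ℝ g)
    (hg2 : Differentiable ℝ (gradient g)) {ρg : ℝ}
    (hH : ∀ a b : E, ‖fderiv ℝ (gradient g) a - fderiv ℝ (gradient g) b‖ ≤ ρg * ‖a - b‖)
    (x₀ y w : E) :
    g y + ⟪gradient g y, w - y⟫ + 1/2 * ⟪fderiv ℝ (gradient g) x₀ (w - y), w - y⟫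
      - ρg/2 * ‖y - x₀‖ * ‖w - y‖^2 - ρg/6 * ‖w - y‖^3 ≤ g w := by
  set v := w - y with hv
  have hφd : ∀ t, HasDerivAt (fun s : ℝ => -g (y + s • v)) (-⟪gradient g (y + t • v), v⟫) t :=
    fun t => (rp_line_deriv hg y v t).neg
  have hb : ∀ t ∈ Icc (0:ℝ) 1, -⟪gradient g (y + t • v), v⟫
      ≤ (-⟪gradient g y, v⟫) + (-⟪fderiv ℝ (gradient g) x₀ v, v⟫ + ρg * ‖y - x₀‖ * ‖v‖^2) * t
        + (ρg/2 * ‖v‖^3) * t^2 := by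
    intro t ht
    have := seg_deriv_bound hg2 hH x₀ y v ht
    have h := (abs_le.mp this).1
    nlinarith [h]
  have hkey := rp_integ hφd hb
  have h1 : y + (1:ℝ) • v = w := by rw [hv]; simp
  have h0 : y + (0:ℝ) • v = y := by simp
  simp only [h1, h0] at hkey
  linarith [hkey]

/-- Two-sided descent lemma from Lipschitz gradient. -/
lemma rp_descent {g : E → ℝ} (hg : Differentiable ℝ g) {Lg : ℝ}
    (hlip : ∀ a b : E, ‖gradient g a - gradient g b‖ ≤ Lg * ‖a - b‖) (y w : E) :
    |g w - g y - ⟪gradient g y, w - y⟫| ≤ Lg/2 * ‖w - y‖^2 := by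
  set v := w - y with hv
  have hcore : ∀ t ∈ Icc (0:ℝ) 1,
      |⟪gradient g (y + t • v), v⟫ - ⟪gradient g y, v⟫| ≤ (Lg * ‖v‖^2) * t := by
    intro t ht
    have h1 : ⟪gradient g (y + t • v), v⟫ - ⟪gradient g y, v⟫
        = ⟪gradient g (y + t • v) - gradient g y, v⟫ := by rw [inner_sub_left]
    rw [h1]
    refine le_trans (abs_real_inner_le_norm _ _) ?_
    have h2 := hlip (y + t • v) y
    have h3 : ‖y + t • v - y‖ = t * ‖v‖ := by
      simp [norm_smul, abs_of_nonneg ht.1]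
    rw [h3] at h2
    have hvn : (0:ℝ) ≤ ‖v‖ := norm_nonneg v
    nlinarith [mul_le_mul_of_nonneg_right h2 hvn]
  have hφd : ∀ t, HasDerivAt (fun s : ℝ => g (y + s • v)) ⟪gradient g (y + t • v), v⟫ t :=
    fun t => rp_line_deriv hg y v t
  have hup := rp_integ hφd (a := ⟪gradient g y, v⟫) (b := Lg * ‖v‖^2) (c := 0)
    (fun t ht => by have := (abs_le.mp (hcore t ht)).2; nlinarith)
  have hdn := rp_integ (fun t => (hφd t).neg) (a := -⟪gradient g y, v⟫) (b := Lg * ‖v‖^2) (c := 0)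
    (fun t ht => by have := (abs_le.mp (hcore t ht)).1; nlinarith)
  have h1 : y + (1:ℝ) • v = w := by rw [hv]; simp
  have h0 : y + (0:ℝ) • v = y := by simp
  simp only [h1, h0, Pi.neg_apply] at hup hdn
  rw [abs_le]
  constructor <;> [linarith [hdn]; linarith [hup]]

/-- Scalar inequality for a regular (non-final) step. `ν` plays the role of `1/η`. -/
lemma rp_regular_scalar (θ ν B ρg ρ p q t1 A C X A' A0 dz n0 n1 : ℝ)
    (hθ0 : 0 < θ) (hθ1 : θ ≤ 1) (hν : 0 < ν)
    (hp : 0 ≤ p) (hq : 0 ≤ q) (hB : 0 ≤ B) (hρg0 : 0 ≤ ρg) (hρgρ : ρg ≤ ρ)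
    (hρB : ρ * B = θ^2*ν/32)
    (hn0 : 0 ≤ n0) (hn1 : 0 ≤ n1)
    (hn0sq : n0^2 = (1-θ)^2 * q)
    (hn1sq : n1^2 = p - 2*(1-θ)*t1 + (1-θ)^2*q)
    (ht1sq : t1^2 ≤ p*q)
    (hA' : A' = A - (1-θ)*X + (1-θ)^2*C)
    (hA0 : A0 = (1-θ)^2*C)
    (hCS : A - X + C ≤ ν * (p - 2*t1 + q))
    (hAp : A ≤ ν/8 * p)
    (hC : -(θ*ν)*q ≤ C)
    (hdz : dz ≤ 3*B) (hdz0 : 0 ≤ dz)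
    (hn0B : n0 ≤ 2*B) (hn1B : n1 ≤ 4*B) :
    (ν/2)*(n0^2 - n1^2 - p) + (1/2)*(A' - A0)
      + (ρg/2*dz*(n1^2+n0^2) + ρg/6*(n1^3+n0^3))
    ≤ -(θ*ν/8)*p - ((1-θ^2)*ν/2 + (37/192)*θ^2*ν)*p
      + ((1-θ^2)*ν/2 + (37/192)*θ^2*ν)*q := by
  have hρ0 : 0 ≤ ρ := le_trans hρg0 hρgρ
  have hθq : (0:ℝ) ≤ 1-θ := by linarith
  -- bounds on squared norms
  have hX0 : (0:ℝ) ≤ p + (1-θ)^2*q := by positivity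
  have ht1lin : -(2*(1-θ)*t1) ≤ p + (1-θ)^2*q := by
    nlinarith [ht1sq, sq_nonneg (p - (1-θ)^2*q), hX0, sq_nonneg (1-θ), mul_nonneg hp hq]
  have hsqle : (1-θ)^2*q ≤ q := by
    nlinarith [mul_nonneg (mul_nonneg hθ0.le (by linarith : (0:ℝ) ≤ 2-θ)) hq]
  have hn1q : n1^2 ≤ 2*p + 2*q := by
    rw [hn1sq]; linarith
  have hn0q : n0^2 ≤ q := by rw [hn0sq]; linarith
  -- error bound
  have hcube1 : ρg/6*n1^3 ≤ ρg/6*(4*B*n1^2) := by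
    apply mul_le_mul_of_nonneg_left _ (by positivity)
    calc n1^3 = n1*n1^2 := by ring
      _ ≤ (4*B)*n1^2 := mul_le_mul_of_nonneg_right hn1B (sq_nonneg n1)
      _ = 4*B*n1^2 := by ring
  have hcube0 : ρg/6*n0^3 ≤ ρg/6*(2*B*n0^2) := by
    apply mul_le_mul_of_nonneg_left _ (by positivity)
    calc n0^3 = n0*n0^2 := by ring
      _ ≤ (2*B)*n0^2 := mul_le_mul_of_nonneg_right hn0B (sq_nonneg n0)
      _ = 2*B*n0^2 := by ring
  have hρgB1 : ρg*(B*n1^2) ≤ ρ*(B*n1^2) :=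
    mul_le_mul_of_nonneg_right hρgρ (mul_nonneg hB (sq_nonneg n1))
  have hρgB0 : ρg*(B*n0^2) ≤ ρ*(B*n0^2) :=
    mul_le_mul_of_nonneg_right hρgρ (mul_nonneg hB (sq_nonneg n0))
  have hdzS : ρg*dz ≤ ρ*(3*B) :=
    mul_le_mul hρgρ hdz hdz0 hρ0
  have hdzS2 : (ρg*dz)*(n1^2+n0^2) ≤ (ρ*(3*B))*(n1^2+n0^2) :=
    mul_le_mul_of_nonneg_right hdzS (by positivity)
  have hE : ρg/2*dz*(n1^2+n0^2) + ρg/6*(n1^3+n0^3)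
      ≤ ρ*B*((13/6)*n1^2 + (11/6)*n0^2) := by
    linarith [hdzS2, hcube1, hcube0, hρgB1, hρgB0]
  have hE2 : ρ*B*((13/6)*n1^2 + (11/6)*n0^2)
      ≤ (26/192)*θ^2*ν*p + (37/192)*θ^2*ν*q := by
    have hpos : (0:ℝ) ≤ ρ*B := by rw [hρB]; positivity
    have h1 : ρ*B*((13/6)*n1^2 + (11/6)*n0^2) ≤ ρ*B*((13/6)*(2*p+2*q) + (11/6)*q) := by
      apply mul_le_mul_of_nonneg_left _ hpos
      linarith
    calc ρ*B*((13/6)*n1^2 + (11/6)*n0^2) ≤ ρ*B*((13/6)*(2*p+2*q) + (11/6)*q) := h1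
      _ = (θ^2*ν/32)*((26/6)*p + (37/6)*q) := by rw [hρB]; ring
      _ = (26/192)*θ^2*ν*p + (37/192)*θ^2*ν*q := by ring
  -- main quadratic-form manipulation
  have hM : (ν/2)*(n0^2 - n1^2 - p) + (1/2)*(A' - A0)
      = ν*((1-θ)*t1 - p) + (1/2)*A - ((1-θ)/2)*X := by
    rw [hn0sq, hn1sq, hA', hA0]; ring
  have hXlow : ((1-θ)/2) * (A + C - ν*(p - 2*t1 + q)) ≤ ((1-θ)/2) * X := by
    apply mul_le_mul_of_nonneg_left _ (by linarith : (0:ℝ) ≤ (1-θ)/2)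
    linarith [hCS]
  have hAθ : (θ/2)*A ≤ (θ/2)*(ν/8*p) :=
    mul_le_mul_of_nonneg_left hAp (by linarith)
  have hCθ : -(((1-θ)/2)*C) ≤ ((1-θ)/2)*((θ*ν)*q) := by
    have h := mul_le_mul_of_nonneg_left hC (by linarith : (0:ℝ) ≤ (1-θ)/2)
    nlinarith [h]
  have hmain : ν*((1-θ)*t1 - p) + (1/2)*A - ((1-θ)/2)*X
      ≤ ν*(-p + (θ/16)*p + ((1-θ)/2)*p + ((1-θ)/2)*q + ((1-θ)*θ/2)*q) := by
    nlinarith [hXlow, hAθ, hCθ]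
  have hθp : 0 ≤ θ*p*ν := by positivity
  have hθ2p : 0 ≤ θ^2*p*ν := by positivity
  have hcore : ν*(-p + (θ/16)*p + ((1-θ)/2)*p + ((1-θ)/2)*q + ((1-θ)*θ/2)*q)
        + ((26/192)*θ^2*ν*p + (37/192)*θ^2*ν*q)
      ≤ -(θ*ν/8)*p - ((1-θ^2)*ν/2 + (37/192)*θ^2*ν)*p
        + ((1-θ^2)*ν/2 + (37/192)*θ^2*ν)*q := by
    nlinarith [hθp, hθ2p]
  rw [hM]
  linarith [hmain, hE, hE2, hcore]

/-- Scalar inequality for the final step. `ν` plays the role of `1/η`. -/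
lemma rp_last_scalar (θ ν Lg p q t1 n0 n1 : ℝ)
    (hθ0 : 0 < θ) (hθ1 : θ ≤ 1) (hν : 0 < ν)
    (hp : 0 ≤ p) (hq : 0 ≤ q)
    (hLg0 : 0 ≤ Lg) (hLg : Lg ≤ ν/8)
    (hn0sq : n0^2 = (1-θ)^2 * q)
    (hn1sq : n1^2 = p - 2*(1-θ)*t1 + (1-θ)^2*q)
    (ht1sq : t1^2 ≤ p*q) :
    (ν/2)*(n0^2 - n1^2 - p) + Lg/2*(n1^2 + n0^2)
    ≤ -(θ*ν/8)*p + ((1-θ^2)*ν/2 + (37/192)*θ^2*ν)*q := by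
  have hθq : (0:ℝ) ≤ 1-θ := by linarith
  have hX0 : (0:ℝ) ≤ (49/36)*p + q := by positivity
  have hAM : (7/3)*t1 ≤ (49/36)*p + q := by
    nlinarith [ht1sq, sq_nonneg ((49/36)*p - q), hX0, hp, hq, mul_nonneg hp hq]
  have hnn : (0:ℝ) ≤ n1^2 + n0^2 := by positivity
  have hLgb : Lg/2*(n1^2+n0^2) ≤ (ν/16)*(n1^2+n0^2) := by
    have h := mul_le_mul_of_nonneg_right hLg hnn
    nlinarith [h]
  have hsum : n1^2 + n0^2 = p - 2*(1-θ)*t1 + 2*(1-θ)^2*q := by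
    rw [hn1sq, hn0sq]; ring
  have hdiff : n0^2 - n1^2 - p = 2*(1-θ)*t1 - 2*p := by
    rw [hn1sq, hn0sq]; ring
  have hcore : 14*(1-θ)*t1 - 15*p + 2*(1-θ)^2*q
      ≤ -(2*θ)*p + 8*(1-θ^2)*q + (37/12)*θ^2*q := by
    have h6 := mul_le_mul_of_nonneg_left hAM (by linarith : (0:ℝ) ≤ 6*(1-θ))
    nlinarith [h6, mul_nonneg hθ0.le hp, mul_nonneg (mul_nonneg hθ0.le hθq) hq,
      mul_nonneg (mul_nonneg hθ0.le hθ0.le) hq]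
  have hmul := mul_le_mul_of_nonneg_left hcore (by positivity : (0:ℝ) ≤ ν/16)
  calc (ν/2)*(n0^2 - n1^2 - p) + Lg/2*(n1^2 + n0^2)
      ≤ (ν/2)*(2*(1-θ)*t1 - 2*p) + (ν/16)*(p - 2*(1-θ)*t1 + 2*(1-θ)^2*q) := by
        rw [hdiff]
        have hLgb2 : Lg/2*(n1^2+n0^2) ≤ ν/16*(p - 2*(1-θ)*t1 + 2*(1-θ)^2*q) := by
          rw [← hsum]; exact hLgb
        linarith [hLgb2]
    _ = (ν/16)*(14*(1-θ)*t1 - 15*p + 2*(1-θ)^2*q) := by ring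
    _ ≤ (ν/16)*(-(2*θ)*p + 8*(1-θ^2)*q + (37/12)*θ^2*q) := hmul
    _ = -(θ*ν/8)*p + ((1-θ^2)*ν/2 + (37/192)*θ^2*ν)*q := by ring


/-- Sufficient decrease per triggered epoch of RISP-Prox
(the convention `x^{-1} = x^0` is realized by truncated subtraction on `ℕ`). -/
theorem risp_prox_triggered_epoch_decrease
    {d : ℕ} (hd : 1 ≤ d)
    (f g : EuclideanSpace ℝ (Fin d) → ℝ) (Lf Lg L ρf ρg ρ : ℝ)
    (hLdef : L = Lf + Lg) (hρdef : ρ = ρf + ρg) (hL : 0 < L) (hρ : 0 < ρ)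
    (hfd : Differentiable ℝ f) (hfd2 : Differentiable ℝ (gradient f))
    (hgd : Differentiable ℝ g) (hgd2 : Differentiable ℝ (gradient g))
    (hfconv : ConvexOn ℝ Set.univ f)
    (hflip : ∀ a b : EuclideanSpace ℝ (Fin d),
      ‖gradient f a - gradient f b‖ ≤ Lf * ‖a - b‖)
    (hglip : ∀ a b : EuclideanSpace ℝ (Fin d),
      ‖gradient g a - gradient g b‖ ≤ Lg * ‖a - b‖)
    (hfHess : ∀ a b : EuclideanSpace ℝ (Fin d),
      ‖fderiv ℝ (gradient f) a - fderiv ℝ (gradient f) b‖ ≤ ρf * ‖a - b‖)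
    (hgHess : ∀ a b : EuclideanSpace ℝ (Fin d),
      ‖fderiv ℝ (gradient g) a - fderiv ℝ (gradient g) b‖ ≤ ρg * ‖a - b‖)
    (ε η B θ : ℝ) (hε : 0 < ε)
    (hη : η = 1 / (8 * L))
    (hB : B = (1 / 2) * Real.sqrt (ε / ρ))
    (hθ : θ = 4 * (ε * ρ * η ^ 2) ^ ((1 : ℝ) / 4))
    (hθ0 : 0 < θ) (hθ1 : θ ≤ 1)
    (K : ℕ) (hK1 : 1 ≤ K) (hKθ : (K : ℝ) * θ = 1)
    (𝒦 : ℕ) (h𝒦1 : 1 ≤ 𝒦) (h𝒦K : 𝒦 ≤ K)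
    (x z : ℕ → EuclideanSpace ℝ (Fin d))
    (heig : ∀ v : EuclideanSpace ℝ (Fin d),
      -(θ / η) * ‖v‖ ^ 2 ≤ (inner ℝ (fderiv ℝ (gradient g) (x 0) v) v : ℝ))
    (hz : ∀ k < 𝒦, z k = x k + (1 - θ) • (x k - x (k - 1)))
    (hchar : ∀ k < 𝒦,
      (1 / η) • (z k - x (k + 1)) = gradient f (x (k + 1)) + gradient g (z k))
    (hno_early : ∀ k, 1 ≤ k → k < 𝒦 →
      (k : ℝ) * ∑ t ∈ Finset.range k, ‖x (t + 1) - x t‖ ^ 2 ≤ B ^ 2)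
    (htrigger : B ^ 2 < (𝒦 : ℝ) * ∑ t ∈ Finset.range 𝒦, ‖x (t + 1) - x t‖ ^ 2) :
    (f (x 𝒦) + g (x 𝒦)) - (f (x 0) + g (x 0)) ≤
      -(1 / 2) * ε ^ ((3 : ℝ) / 2) / Real.sqrt ρ := by
  -- basic positivity and constants
  have hη0 : 0 < η := by rw [hη]; positivity
  have hν0 : (0:ℝ) < 1/η := by positivity
  have hνL : 1/η = 8*L := by rw [hη]; field_simp
  -- nonnegativity of Lipschitz constants
  have hunit : ∃ e : EuclideanSpace ℝ (Fin d), ‖e‖ = 1 := by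
    refine ⟨EuclideanSpace.single (⟨0, hd⟩ : Fin d) (1:ℝ), ?_⟩
    rw [EuclideanSpace.norm_single]; norm_num
  obtain ⟨e, he⟩ := hunit
  have hLf0 : 0 ≤ Lf := by
    have h := hflip e 0
    simp only [sub_zero, he, mul_one] at h
    exact le_trans (norm_nonneg _) h
  have hLg0 : 0 ≤ Lg := by
    have h := hglip e 0
    simp only [sub_zero, he, mul_one] at h
    exact le_trans (norm_nonneg _) h
  have hρf0 : 0 ≤ ρf := by
    have h := hfHess e 0
    simp only [sub_zero, he, mul_one] at h
    exact le_trans (norm_nonneg _) h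
  have hρg0 : 0 ≤ ρg := by
    have h := hgHess e 0
    simp only [sub_zero, he, mul_one] at h
    exact le_trans (norm_nonneg _) h
  have hρgρ : ρg ≤ ρ := by rw [hρdef]; linarith
  have hLgL : Lg ≤ L := by rw [hLdef]; linarith
  have hLgν : Lg ≤ (1/η)/8 := by rw [hνL]; linarith
  have hB0 : 0 < B := by
    rw [hB]
    have : 0 < Real.sqrt (ε/ρ) := Real.sqrt_pos.mpr (by positivity)
    linarith
  -- the quadratic identities for the constants
  have hsqrtερ : Real.sqrt (ε*ρ) = 2*(ρ*B) := by
    have h1 : Real.sqrt (ρ^2 * (ε/ρ)) = Real.sqrt (ρ^2) * Real.sqrt (ε/ρ) :=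
      Real.sqrt_mul (sq_nonneg ρ) _
    have h2 : Real.sqrt (ρ^2) = ρ := Real.sqrt_sq hρ.le
    have h3 : ρ^2*(ε/ρ) = ε*ρ := by field_simp
    calc Real.sqrt (ε*ρ) = Real.sqrt (ρ^2*(ε/ρ)) := by rw [h3]
      _ = ρ * Real.sqrt (ε/ρ) := by rw [h1, h2]
      _ = 2*(ρ*B) := by rw [hB]; ring
  have hθsq : θ^2 = 16*η*Real.sqrt (ε*ρ) := by
    have hx : (0:ℝ) ≤ ε*ρ*η^2 := by positivity
    have h1 : ((ε*ρ*η^2) ^ ((1:ℝ)/4))^(2:ℕ) = (ε*ρ*η^2) ^ ((1:ℝ)/2) := by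
      rw [← Real.rpow_natCast ((ε*ρ*η^2) ^ ((1:ℝ)/4)) 2, ← Real.rpow_mul hx]
      norm_num
    have h2 : (ε*ρ*η^2) ^ ((1:ℝ)/2) = Real.sqrt (ε*ρ*η^2) := (Real.sqrt_eq_rpow _).symm
    have h3 : Real.sqrt (ε*ρ*η^2) = Real.sqrt (ε*ρ) * η := by
      rw [Real.sqrt_mul (by positivity : (0:ℝ) ≤ ε*ρ), Real.sqrt_sq hη0.le]
    calc θ^2 = 16*(((ε*ρ*η^2) ^ ((1:ℝ)/4))^(2:ℕ)) := by rw [hθ]; ring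
      _ = 16*(Real.sqrt (ε*ρ)*η) := by rw [h1, h2, h3]
      _ = 16*η*Real.sqrt (ε*ρ) := by ring
  have hρB : ρ * B = θ^2*(1/η)/32 := by
    rw [hθsq, hsqrtερ]
    field_simp
    ring
  have hB2 : B^2 = ε/ρ/4 := by
    rw [hB, mul_pow, Real.sq_sqrt (by positivity : (0:ℝ) ≤ ε/ρ)]
    ring
  have hconst : (θ*(1/η)/8) * (θ*B^2) = 1/2 * ε ^ ((3:ℝ)/2) / Real.sqrt ρ := by
    have h32 : ε ^ ((3:ℝ)/2) = ε * Real.sqrt ε := by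
      rw [show ((3:ℝ)/2) = 1 + 1/2 by norm_num, Real.rpow_add hε, Real.rpow_one,
        ← Real.sqrt_eq_rpow]
    have hsε : Real.sqrt (ε*ρ) = Real.sqrt ε * Real.sqrt ρ := Real.sqrt_mul hε.le ρ
    have hρs : Real.sqrt ρ * Real.sqrt ρ = ρ := Real.mul_self_sqrt hρ.le
    have hρs0 : Real.sqrt ρ ≠ 0 := by
      have : 0 < Real.sqrt ρ := Real.sqrt_pos.mpr hρ
      linarith
    rw [h32]
    calc (θ*(1/η)/8) * (θ*B^2) = θ^2*B^2*(1/η)/8 := by ring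
      _ = (16*η*(Real.sqrt ε * Real.sqrt ρ))*(ε/ρ/4)*(1/η)/8 := by rw [hθsq, hB2, hsε]
      _ = 1/2 * (ε * Real.sqrt ε) / Real.sqrt ρ := by
          rw [show ε/ρ/4 = ε/(Real.sqrt ρ*Real.sqrt ρ)/4 by rw [hρs]]
          field_simp
          ring
  -- distance bounds
  have hxB : ∀ j, j < 𝒦 → ‖x j - x 0‖ ≤ B := by
    intro j hj
    rcases Nat.eq_zero_or_pos j with h0 | h1
    · simp [h0]; linarith
    have htel : x j - x 0 = ∑ t ∈ Finset.range j, (x (t+1) - x t) :=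
      (Finset.sum_range_sub (fun i => x i) j).symm
    have hn : ‖x j - x 0‖ ≤ ∑ t ∈ Finset.range j, ‖x (t+1) - x t‖ := by
      rw [htel]; exact norm_sum_le _ _
    have hcs : (∑ t ∈ Finset.range j, ‖x (t+1) - x t‖)^2
        ≤ (j:ℝ) * ∑ t ∈ Finset.range j, ‖x (t+1) - x t‖^2 := by
      have := sq_sum_le_card_mul_sum_sq (s := Finset.range j)
        (f := fun t => ‖x (t+1) - x t‖)
      simpa using this
    have hB2' := hno_early j h1 hj
    have hsum0 : 0 ≤ ∑ t ∈ Finset.range j, ‖x (t+1) - x t‖ :=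
      Finset.sum_nonneg (fun i _ => norm_nonneg _)
    have hsq : (∑ t ∈ Finset.range j, ‖x (t+1) - x t‖)^2 ≤ B^2 := le_trans hcs hB2'
    have : ∑ t ∈ Finset.range j, ‖x (t+1) - x t‖ ≤ B := by
      nlinarith [hsq, hsum0, hB0]
    linarith
  -- the quadratic form bound
  have hHquad : ∀ v : EuclideanSpace ℝ (Fin d),
      ⟪fderiv ℝ (gradient g) (x 0) v, v⟫ ≤ Lg * ‖v‖^2 := by
    intro v
    have hlip : LipschitzWith (Real.toNNReal Lg) (gradient g) := by
      apply LipschitzWith.of_dist_le_mul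
      intro a b
      rw [dist_eq_norm, dist_eq_norm, Real.coe_toNNReal _ hLg0]
      exact hglip a b
    have hHn : ‖fderiv ℝ (gradient g) (x 0)‖ ≤ Lg := by
      have := (hgd2 (x 0)).hasFDerivAt.le_of_lipschitz hlip
      rwa [Real.coe_toNNReal _ hLg0] at this
    have h1 := real_inner_le_norm (fderiv ℝ (gradient g) (x 0) v) v
    have h2 := ContinuousLinearMap.le_opNorm (fderiv ℝ (gradient g) (x 0)) v
    nlinarith [norm_nonneg v, norm_nonneg (fderiv ℝ (gradient g) (x 0) v)]
  -- the f-part (prox) inequality, valid for every step k < 𝒦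
  have hfpart : ∀ k, k < 𝒦 →
      f (x (k+1)) - f (x k) ≤ (1/η)/2 * (‖x k - z k‖^2 - ‖x (k+1) - z k‖^2
        - ‖x (k+1) - x k‖^2) + ⟪gradient g (z k), x k - x (k+1)⟫ := by
    intro k hk
    have hcg := rp_convex_grad hfd hfconv (x (k+1)) (x k)
    have hgr : gradient f (x (k+1)) = (1/η) • (z k - x (k+1)) - gradient g (z k) := by
      have h := hchar k hk
      rw [h]; abel
    have hpol : ⟪z k - x (k+1), x k - x (k+1)⟫
        = (‖x (k+1) - z k‖^2 + ‖x (k+1) - x k‖^2 - ‖x k - z k‖^2)/2 := by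
      have hid := norm_sub_sq_real (z k - x (k+1)) (x k - x (k+1))
      have hab : z k - x (k+1) - (x k - x (k+1)) = z k - x k := by abel
      rw [hab] at hid
      have e1 : ‖z k - x (k+1)‖ = ‖x (k+1) - z k‖ := norm_sub_rev _ _
      have e2 : ‖x k - x (k+1)‖ = ‖x (k+1) - x k‖ := norm_sub_rev _ _
      have e3 : ‖z k - x k‖ = ‖x k - z k‖ := norm_sub_rev _ _
      rw [e1, e2, e3] at hid
      linarith
    have hinner : ⟪gradient f (x (k+1)), x k - x (k+1)⟫
        = (1/η)*⟪z k - x (k+1), x k - x (k+1)⟫ - ⟪gradient g (z k), x k - x (k+1)⟫ := by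
      rw [hgr, inner_sub_left, real_inner_smul_left]
    rw [hinner, hpol] at hcg
    linarith
  -- the inner-product cancellation
  have hcancel : ∀ k : ℕ, ⟪gradient g (z k), x (k+1) - z k⟫
      + ⟪gradient g (z k), x k - x (k+1)⟫ = ⟪gradient g (z k), x k - z k⟫ := by
    intro k
    rw [← inner_add_right]
    congr 1
    abel

  -- common Cauchy-Schwarz fact
  have hCSsq : ∀ a b : EuclideanSpace ℝ (Fin d), ⟪a, b⟫^2 ≤ ‖a‖^2 * ‖b‖^2 := by
    intro a b
    have h1 := real_inner_mul_inner_self_le a b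
    rw [real_inner_self_eq_norm_sq, real_inner_self_eq_norm_sq] at h1
    nlinarith [h1]
  have h1θ : (0:ℝ) ≤ 1 - θ := by linarith
  -- vector decomposition facts, for k < 𝒦
  have hu : ∀ k, k < 𝒦 → z k - x k = (1-θ) • (x k - x (k-1)) := by
    intro k hk; rw [hz k hk, add_sub_cancel_left]
  have hu' : ∀ k, k < 𝒦 → x (k+1) - z k
      = (x (k+1) - x k) - (1-θ) • (x k - x (k-1)) := by
    intro k hk; rw [hz k hk]; abel
  have huneg : ∀ k, k < 𝒦 → x k - z k = -((1-θ) • (x k - x (k-1))) := by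
    intro k hk; rw [hz k hk]; abel
  have hn0sq : ∀ k, k < 𝒦 → ‖x k - z k‖^2 = (1-θ)^2 * ‖x k - x (k-1)‖^2 := by
    intro k hk
    rw [huneg k hk, norm_neg, norm_smul, Real.norm_eq_abs, abs_of_nonneg h1θ, mul_pow]
  have hn1sq : ∀ k, k < 𝒦 → ‖x (k+1) - z k‖^2
      = ‖x (k+1) - x k‖^2 - 2*(1-θ)*⟪x (k+1) - x k, x k - x (k-1)⟫
        + (1-θ)^2*‖x k - x (k-1)‖^2 := by
    intro k hk
    have hns := norm_sub_sq_real (x (k+1) - x k) ((1-θ) • (x k - x (k-1)))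
    rw [real_inner_smul_right, norm_smul, Real.norm_eq_abs, abs_of_nonneg h1θ] at hns
    rw [hu' k hk, hns]; ring
  -- regular step inequality
  have hregular : ∀ k, k + 1 < 𝒦 →
      f (x (k+1)) + g (x (k+1)) - (f (x k) + g (x k)) ≤
        -(θ*(1/η)/8)*‖x (k+1) - x k‖^2
        - ((1-θ^2)*(1/η)/2 + (37/192)*θ^2*(1/η))*‖x (k+1) - x k‖^2
        + ((1-θ^2)*(1/η)/2 + (37/192)*θ^2*(1/η))*‖x k - x (k-1)‖^2 := by
    intro k hk1
    have hk : k < 𝒦 := Nat.lt_of_succ_lt hk1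
    have hI1 := hfpart k hk
    have hup := rp_taylor2_upper hgd hgd2 hgHess (x 0) (z k) (x (k+1))
    have hlo := rp_taylor2_lower hgd hgd2 hgHess (x 0) (z k) (x k)
    have hcan := hcancel k
    -- distance bounds
    have hwB : ‖x k - x (k-1)‖ ≤ 2*B := by
      have ht : ‖x k - x (k-1)‖ ≤ ‖x k - x 0‖ + ‖x (k-1) - x 0‖ := by
        have := dist_triangle (x k) (x 0) (x (k-1))
        rw [dist_eq_norm, dist_eq_norm, dist_eq_norm] at this
        rw [norm_sub_rev (x 0) (x (k-1))] at this
        exact this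
      have h1 := hxB k hk
      have h2 := hxB (k-1) (Nat.lt_of_le_of_lt (Nat.sub_le k 1) hk)
      linarith
    have huB : ‖x k - z k‖ ≤ 2*B := by
      rw [huneg k hk, norm_neg, norm_smul, Real.norm_eq_abs, abs_of_nonneg h1θ]
      nlinarith [norm_nonneg (x k - x (k-1))]
    have hdzB : ‖z k - x 0‖ ≤ 3*B := by
      have ht : ‖z k - x 0‖ ≤ ‖z k - x k‖ + ‖x k - x 0‖ := by
        have := dist_triangle (z k) (x k) (x 0)
        rw [dist_eq_norm, dist_eq_norm, dist_eq_norm] at this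
        exact this
      have h1 := hxB k hk
      have h2 : ‖z k - x k‖ = ‖x k - z k‖ := norm_sub_rev _ _
      linarith
    have hn1B : ‖x (k+1) - z k‖ ≤ 4*B := by
      have ht : ‖x (k+1) - z k‖ ≤ ‖x (k+1) - x 0‖ + ‖x 0 - z k‖ := by
        have := dist_triangle (x (k+1)) (x 0) (z k)
        rw [dist_eq_norm, dist_eq_norm, dist_eq_norm] at this
        exact this
      have h1 := hxB (k+1) hk1
      have h2 : ‖x 0 - z k‖ = ‖z k - x 0‖ := norm_sub_rev _ _
      linarith
    -- quadratic form identities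
    have hA'id : ⟪fderiv ℝ (gradient g) (x 0) (x (k+1) - z k), x (k+1) - z k⟫
        = ⟪fderiv ℝ (gradient g) (x 0) (x (k+1) - x k), x (k+1) - x k⟫
          - (1-θ)*(⟪fderiv ℝ (gradient g) (x 0) (x (k+1) - x k), x k - x (k-1)⟫
            + ⟪fderiv ℝ (gradient g) (x 0) (x k - x (k-1)), x (k+1) - x k⟫)
          + (1-θ)^2*⟪fderiv ℝ (gradient g) (x 0) (x k - x (k-1)), x k - x (k-1)⟫ := by
      rw [hu' k hk]
      simp only [map_sub, map_smul, inner_sub_left, inner_sub_right,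
        real_inner_smul_left, real_inner_smul_right]
      ring
    have hA0id : ⟪fderiv ℝ (gradient g) (x 0) (x k - z k), x k - z k⟫
        = (1-θ)^2*⟪fderiv ℝ (gradient g) (x 0) (x k - x (k-1)), x k - x (k-1)⟫ := by
      rw [huneg k hk]
      simp only [map_neg, map_smul, inner_neg_neg, real_inner_smul_left,
        real_inner_smul_right]
      ring
    have hCS : ⟪fderiv ℝ (gradient g) (x 0) (x (k+1) - x k), x (k+1) - x k⟫
          - (⟪fderiv ℝ (gradient g) (x 0) (x (k+1) - x k), x k - x (k-1)⟫
            + ⟪fderiv ℝ (gradient g) (x 0) (x k - x (k-1)), x (k+1) - x k⟫)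
          + ⟪fderiv ℝ (gradient g) (x 0) (x k - x (k-1)), x k - x (k-1)⟫
        ≤ (1/η) * (‖x (k+1) - x k‖^2 - 2*⟪x (k+1) - x k, x k - x (k-1)⟫
          + ‖x k - x (k-1)‖^2) := by
      have h1 : ⟪fderiv ℝ (gradient g) (x 0) ((x (k+1) - x k) - (x k - x (k-1))),
          (x (k+1) - x k) - (x k - x (k-1))⟫
          = ⟪fderiv ℝ (gradient g) (x 0) (x (k+1) - x k), x (k+1) - x k⟫
            - (⟪fderiv ℝ (gradient g) (x 0) (x (k+1) - x k), x k - x (k-1)⟫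
              + ⟪fderiv ℝ (gradient g) (x 0) (x k - x (k-1)), x (k+1) - x k⟫)
            + ⟪fderiv ℝ (gradient g) (x 0) (x k - x (k-1)), x k - x (k-1)⟫ := by
        simp only [map_sub, inner_sub_left, inner_sub_right]
        ring
      have h2 := hHquad ((x (k+1) - x k) - (x k - x (k-1)))
      have h3 : ‖(x (k+1) - x k) - (x k - x (k-1))‖^2
          = ‖x (k+1) - x k‖^2 - 2*⟪x (k+1) - x k, x k - x (k-1)⟫
            + ‖x k - x (k-1)‖^2 := norm_sub_sq_real _ _
      have h4 : Lg * ‖(x (k+1) - x k) - (x k - x (k-1))‖^2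
          ≤ (1/η) * ‖(x (k+1) - x k) - (x k - x (k-1))‖^2 := by
        apply mul_le_mul_of_nonneg_right _ (sq_nonneg _)
        have : (0:ℝ) < 1/η := hν0
        linarith [hLgν]
      rw [← h1, ← h3]
      linarith [h2, h4]
    have hAp : ⟪fderiv ℝ (gradient g) (x 0) (x (k+1) - x k), x (k+1) - x k⟫
        ≤ (1/η)/8 * ‖x (k+1) - x k‖^2 := by
      have h2 := hHquad (x (k+1) - x k)
      have h4 : Lg * ‖x (k+1) - x k‖^2 ≤ (1/η)/8 * ‖x (k+1) - x k‖^2 :=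
        mul_le_mul_of_nonneg_right hLgν (sq_nonneg _)
      linarith
    have hCb : -(θ*(1/η))*‖x k - x (k-1)‖^2
        ≤ ⟪fderiv ℝ (gradient g) (x 0) (x k - x (k-1)), x k - x (k-1)⟫ := by
      have h := heig (x k - x (k-1))
      have he : -(θ*(1/η))*‖x k - x (k-1)‖^2 = -(θ/η)*‖x k - x (k-1)‖^2 := by
        rw [mul_one_div]
      rw [he]
      exact h
    have SL := rp_regular_scalar θ (1/η) B ρg ρ
      (‖x (k+1) - x k‖^2) (‖x k - x (k-1)‖^2)
      (⟪x (k+1) - x k, x k - x (k-1)⟫)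
      (⟪fderiv ℝ (gradient g) (x 0) (x (k+1) - x k), x (k+1) - x k⟫)
      (⟪fderiv ℝ (gradient g) (x 0) (x k - x (k-1)), x k - x (k-1)⟫)
      (⟪fderiv ℝ (gradient g) (x 0) (x (k+1) - x k), x k - x (k-1)⟫
        + ⟪fderiv ℝ (gradient g) (x 0) (x k - x (k-1)), x (k+1) - x k⟫)
      (⟪fderiv ℝ (gradient g) (x 0) (x (k+1) - z k), x (k+1) - z k⟫)
      (⟪fderiv ℝ (gradient g) (x 0) (x k - z k), x k - z k⟫)
      (‖z k - x 0‖) (‖x k - z k‖) (‖x (k+1) - z k‖)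
      hθ0 hθ1 hν0 (sq_nonneg _) (sq_nonneg _) hB0.le hρg0 hρgρ hρB
      (norm_nonneg _) (norm_nonneg _) (hn0sq k hk) (hn1sq k hk)
      (hCSsq _ _) hA'id hA0id hCS hAp hCb hdzB (norm_nonneg _) huB hn1B
    linarith [hI1, hup, hlo, hcan, SL]
  -- final step inequality (valid for any k < 𝒦)
  have hlaststep : ∀ k, k < 𝒦 →
      f (x (k+1)) + g (x (k+1)) - (f (x k) + g (x k)) ≤
        -(θ*(1/η)/8)*‖x (k+1) - x k‖^2
        + ((1-θ^2)*(1/η)/2 + (37/192)*θ^2*(1/η))*‖x k - x (k-1)‖^2 := by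
    intro k hk
    have hI1 := hfpart k hk
    have hup := (abs_le.mp (rp_descent hgd hglip (z k) (x (k+1)))).2
    have hlo := (abs_le.mp (rp_descent hgd hglip (z k) (x k))).1
    have hcan := hcancel k
    have SL := rp_last_scalar θ (1/η) Lg
      (‖x (k+1) - x k‖^2) (‖x k - x (k-1)‖^2)
      (⟪x (k+1) - x k, x k - x (k-1)⟫)
      (‖x k - z k‖) (‖x (k+1) - z k‖)
      hθ0 hθ1 hν0 (sq_nonneg _) (sq_nonneg _) hLg0 hLgν
      (hn0sq k hk) (hn1sq k hk) (hCSsq _ _)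
    linarith [hI1, hup, hlo, hcan, SL]
  -- telescoping with banked momentum
  have hbank : ∀ n, n < 𝒦 → f (x n) + g (x n) - (f (x 0) + g (x 0)) ≤
      -(θ*(1/η)/8) * (∑ t ∈ Finset.range n, ‖x (t+1) - x t‖^2)
      - ((1-θ^2)*(1/η)/2 + (37/192)*θ^2*(1/η)) * ‖x n - x (n-1)‖^2 := by
    intro n
    induction n with
    | zero => intro _; simp
    | succ n ih =>
      intro hn
      have hn' : n < 𝒦 := Nat.lt_of_succ_lt hn
      have h1 := ih hn'
      have h2 := hregular n hn
      rw [Finset.sum_range_succ]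
      have hidx : n + 1 - 1 = n := by omega
      rw [hidx]
      linarith [h1, h2]
  -- assemble the epoch
  obtain ⟨m, hm⟩ : ∃ m, 𝒦 = m + 1 := ⟨𝒦 - 1, (Nat.succ_pred_eq_of_pos h𝒦1).symm⟩
  subst hm
  have hmlt : m < m + 1 := Nat.lt_succ_self m
  have h1 := hbank m hmlt
  have h2 := hlaststep m hmlt
  have hepoch : f (x (m+1)) + g (x (m+1)) - (f (x 0) + g (x 0)) ≤
      -(θ*(1/η)/8) * (∑ t ∈ Finset.range (m+1), ‖x (t+1) - x t‖^2) := by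
    rw [Finset.sum_range_succ]
    linarith [h1, h2]
  -- the trigger gives the final quantitative bound
  have hS0 : (0:ℝ) ≤ ∑ t ∈ Finset.range (m+1), ‖x (t+1) - x t‖^2 :=
    Finset.sum_nonneg (fun i _ => sq_nonneg _)
  have h𝒦pos : (0:ℝ) < ((m+1 : ℕ):ℝ) := by positivity
  have hθK : θ * ((m+1 : ℕ):ℝ) ≤ 1 := by
    have hcast : ((m+1 : ℕ):ℝ) ≤ (K:ℝ) := Nat.cast_le.mpr h𝒦K
    nlinarith [hKθ, hθ0.le]
  have hSlb : θ*B^2 ≤ ∑ t ∈ Finset.range (m+1), ‖x (t+1) - x t‖^2 := by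
    nlinarith [htrigger, hθK, sq_nonneg B, hS0, h𝒦pos]
  have hc0 : (0:ℝ) ≤ θ*(1/η)/8 := by positivity
  calc f (x (m+1)) + g (x (m+1)) - (f (x 0) + g (x 0))
      ≤ -(θ*(1/η)/8) * (∑ t ∈ Finset.range (m+1), ‖x (t+1) - x t‖^2) := hepoch
    _ ≤ -(θ*(1/η)/8) * (θ*B^2) := by
        have := mul_le_mul_of_nonneg_left hSlb hc0
        linarith
    _ = -(1/2 * ε ^ ((3:ℝ)/2) / Real.sqrt ρ) := by rw [← hconst]; ring
    _ = -(1/2) * ε ^ ((3:ℝ)/2) / Real.sqrt ρ := by ring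

end
end
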